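/- If π(i,m) is a j-play on a basic tile τ which is j-end, π(i,n) is a play on τ and n ≥ m, then n = m. -/

import Mathlib

set_option autoImplicit false

/-! ## Simple types over a single base type -/

inductive Ty : Type
  | base : Ty
  | arr : Ty → Ty → Ty
  deriving DecidableEq

/-- The order of a simple type. -/
def Ty.order : Ty → ℕ
  | .base => 1
  | .arr A B => max (A.order + 1) B.order

/-- The number of top-level arguments (the width) of a type. -/
def Ty.arity : Ty → ℕ
  | .base => 0
  | .arr _ B => B.arity + 1

/-- The argument types `A₁,…,Aₙ` of `(A₁,…,Aₙ,0)`. -/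
def Ty.args : Ty → List Ty
  | .base => []
  | .arr A B => A :: B.args

/-- The largest width of any subtype of a type. -/
def Ty.subWidth : Ty → ℕ
  | .base => 0
  | .arr A B => max (Ty.arity (.arr A B)) (max A.subWidth B.subWidth)

/-! ## Simply typed λ-terms with named, typed variables and constants -/

inductive Tm : Type
  | var : ℕ → Ty → Tm
  | const : ℕ → Ty → Tm
  | lam : ℕ → Ty → Tm → Tm
  | app : Tm → Tm → Tm
  deriving DecidableEq

namespace Tm

/-- The type of a term (if well-typed). -/
def ty? : Tm → Option Ty
  | .var _ A => some A
  | .const _ A => some A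
  | .lam _ A t => (ty? t).map (Ty.arr A)
  | .app s t =>
      match ty? s with
      | some (Ty.arr A B) => if ty? t = some A then some B else none
      | _ => none

/-- The free variables (name/type pairs). -/
def free : Tm → Set (ℕ × Ty)
  | .var x A => {(x, A)}
  | .const _ _ => ∅
  | .lam x A t => free t \ {(x, A)}
  | .app s t => free s ∪ free t

def Closed (t : Tm) : Prop := t.free = ∅

/-- `z` occurs free in `t`. -/
def freeName (t : Tm) (z : ℕ) : Prop := ∃ B, (z, B) ∈ t.free

/-- A binder `λz` occurs in `t`. -/
def bindsVar : Tm → ℕ → Prop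
  | .var _ _, _ => False
  | .const _ _, _ => False
  | .lam x _ t, z => x = z ∨ bindsVar t z
  | .app s t, z => bindsVar s z ∨ bindsVar t z

/-- The constants occurring in a term. -/
def consts : Tm → Set ℕ
  | .var _ _ => ∅
  | .const c _ => {c}
  | .lam _ _ t => consts t
  | .app s t => consts s ∪ consts t

/-- The list of bound-variable names. -/
def binders : Tm → List ℕ
  | .var _ _ => []
  | .const _ _ => []
  | .lam x _ t => x :: binders t
  | .app s t => binders s ++ binders t

/-- A term is well-named if all its binders are pairwise distinct. -/
def WellNamed (t : Tm) : Prop := t.binders.Nodup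

/-- Substitution of `u` for the free variable `x : A` (capture-permitting; it is
only applied to well-named terms with disjoint bound variables). -/
def subst (x : ℕ) (A : Ty) (u : Tm) : Tm → Tm
  | .var y B => if y = x ∧ B = A then u else .var y B
  | .const c B => .const c B
  | .lam y B t => if y = x ∧ B = A then .lam y B t else .lam y B (subst x A u t)
  | .app s t => .app (subst x A u s) (subst x A u t)

/-- One-step β-reduction, closed under congruence. -/
inductive Beta : Tm → Tm → Prop
  | beta (x : ℕ) (A : Ty) (t u : Tm) : Beta (.app (.lam x A t) u) (subst x A u t)
  | appL {s s' : Tm} (t : Tm) : Beta s s' → Beta (.app s t) (.app s' t)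
  | appR (s : Tm) {t t' : Tm} : Beta t t' → Beta (.app s t) (.app s t')
  | lam (x : ℕ) (A : Ty) {t t' : Tm} : Beta t t' → Beta (Tm.lam x A t) (Tm.lam x A t')

/-- β-equality. -/
def BetaEq : Tm → Tm → Prop := Relation.EqvGen Beta

/-- Application of a head to a list of arguments. -/
def appArgs (t : Tm) (args : List Tm) : Tm := args.foldl .app t

inductive IsHead : Tm → Prop
  | var (x : ℕ) (A : Ty) : IsHead (.var x A)
  | const (c : ℕ) (A : Ty) : IsHead (.const c A)

/-- η-long normal forms. -/
inductive ELNF : Tm → Prop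
  | head (u : Tm) (args : List Tm) :
      IsHead u → (appArgs u args).ty? = some Ty.base →
      (∀ i : Fin args.length, ELNF args[i]) → ELNF (appArgs u args)
  | lam (x : ℕ) (A : Ty) {t : Tm} : ELNF t → ELNF (Tm.lam x A t)

/-- Strip the leading λ-abstractions. -/
def stripLams : Tm → List (ℕ × Ty) × Tm
  | .lam x A t => ((x, A) :: (stripLams t).1, (stripLams t).2)
  | t => ([], t)

/-- Decompose a term into its head and arguments. -/
def headArgs : Tm → Tm × List Tm
  | .app s u => ((headArgs s).1, (headArgs s).2 ++ [u])
  | t => (t, [])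

/-- `λx₁…xₙ. b` for a list of binders. -/
def lams (xs : List (ℕ × Ty)) (b : Tm) : Tm := xs.foldr (fun p s => Tm.lam p.1 p.2 s) b

/-- Replace the free variables `xs` by their forbidden constants (via `fc`). -/
def fsubst (fc : ℕ → ℕ) (xs : List (ℕ × Ty)) (t : Tm) : Tm :=
  xs.foldl (fun s p => subst p.1 p.2 (Tm.const (fc p.1) p.2) s) t

/-- Replace each `yⱼ ∈ ys` by the forbidden constant of the corresponding
`xⱼ ∈ xs`. -/
def fsubstPaired (fc : ℕ → ℕ) (ys xs : List (ℕ × Ty)) (t : Tm) : Tm :=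
  (ys.zip xs).foldl (fun s p => subst p.1.1 p.1.2 (Tm.const (fc p.2.1) p.2.2) s) t

def isApp : Tm → Bool
  | .app _ _ => true
  | _ => false

/-- The right size `δ(u)` of a right term. -/
def rsize : Tm → ℕ
  | .var _ _ => 0
  | .const _ _ => 0
  | .lam _ _ t => rsize t
  | .app s t => rsize s + rsize t + (if s.isApp then 0 else 1)

/-- Largest width of any type occurring in the term. -/
def maxWidth : Tm → ℕ
  | .var _ A => A.subWidth
  | .const _ A => A.subWidth
  | .lam _ A t => max A.subWidth (maxWidth t)
  | .app s t => max (maxWidth s) (maxWidth t)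

end Tm

/-! ## Dual interpolation problems -/

/-- An interpolation (dis)equation `x v₁ … vₙ ≈ u`. -/
structure DIEqn : Type where
  args : List Tm
  rhs : Tm
  pos : Bool

/-- A dual interpolation problem: a finite nonempty family of interpolation
equations and disequations with the same free variable `x : xty`, together with
the fresh forbidden constants: `fc` assigns to each bound variable of a right
term its forbidden constant. -/
structure DIProblem : Type where
  xty : Ty
  eqns : List DIEqn
  eqns_ne : eqns ≠ []
  forb : Set ℕ
  fc : ℕ → ℕ
  fc_mem : ∀ x, fc x ∈ forb
  fc_inj : Function.Injective fc
  wf : ∀ e ∈ eqns,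
    e.args.length = xty.args.length ∧
    (∀ p ∈ e.args.zip xty.args, p.1.ty? = some p.2 ∧ p.1.Closed ∧ p.1.ELNF) ∧
    e.rhs.ty? = some Ty.base ∧ e.rhs.Closed ∧
    (∀ c ∈ e.rhs.consts, c ∉ forb) ∧ (∀ v ∈ e.args, ∀ c ∈ v.consts, c ∉ forb)

/-- The order of a problem is the order of its free variable. -/
def DIProblem.order (P : DIProblem) : ℕ := P.xty.order

/-- The right size `δ` of a problem. -/
def DIProblem.delta (P : DIProblem) : ℕ := (P.eqns.map fun e => e.rhs.rsize).sum

/-- The arity `α` of a problem: the largest width of a type among the subtypes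
associated with `P`. -/
def DIProblem.arity (P : DIProblem) : ℕ :=
  max P.xty.subWidth ((P.eqns.map fun e => e.rhs.maxWidth).foldr max 0)

/-- A potential solution term for `P`: closed, in η-long normal form, of the
right type, well-named and without forbidden constants. -/
def Candidate (P : DIProblem) (t : Tm) : Prop :=
  t.Closed ∧ t.ELNF ∧ t.ty? = some P.xty ∧ t.WellNamed ∧ ∀ c ∈ t.consts, c ∉ P.forb

/-- `t ⊨ P`. -/
def Solves (P : DIProblem) (t : Tm) : Prop :=
  Candidate P t ∧ ∀ e ∈ P.eqns,
    (e.pos = true → Tm.BetaEq (Tm.appArgs t e.args) e.rhs) ∧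
    (e.pos = false → ¬ Tm.BetaEq (Tm.appArgs t e.args) e.rhs)

/-! ## Term trees (η-long normal forms with dummy lambdas) -/

/-- Labels of term-tree nodes. -/
inductive TLabel : Type
  | lam : List (ℕ × Ty) → TLabel
  | var : ℕ → Ty → TLabel
  | const : ℕ → Ty → TLabel
  deriving DecidableEq

/-- Term trees. -/
inductive TTree : Type
  | node : TLabel → List TTree → TTree

def TTree.label : TTree → TLabel
  | .node l _ => l

def TTree.children : TTree → List TTree
  | .node _ cs => cs

/-- The subtree at a path (nodes are identified with paths from the root). -/
def TTree.at? : TTree → List ℕ → Option TTree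
  | t, [] => some t
  | t, i :: p =>
      match t.children[i]? with
      | some c => TTree.at? c p
      | none => none

/-- The label at a path. -/
def TTree.labelAt? (T : TTree) (p : List ℕ) : Option TLabel := (T.at? p).map TTree.label

/-- The variables bound by λ-labels along a path. -/
def TTree.bindersAlong : TTree → List ℕ → List ℕ
  | _, [] => []
  | t, i :: p =>
      (match t.label with
       | .lam xs => xs.map Prod.fst
       | _ => []) ++
      (match t.children[i]? with
       | some c => TTree.bindersAlong c p
       | none => [])

/-- `λ…y…` labels some node of the tree. -/
def TTree.BindsVar (t : TTree) (y : ℕ) : Prop :=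
  ∃ p xs, t.labelAt? p = some (.lam xs) ∧ y ∈ xs.map Prod.fst

/-- `y` occurs free in the tree. -/
def TTree.FreeVarOcc (t : TTree) (y : ℕ) : Prop :=
  ∃ p A, t.labelAt? p = some (.var y A) ∧ y ∉ t.bindersAlong p

def TLabel.isHeadLabel : TLabel → Prop
  | .lam _ => False
  | _ => True

/-! ## Tree representation of a term -/

mutual
  /-- `RepLam T t`: the λ-rooted tree `T` represents the term `t`. -/
  inductive RepLam : TTree → Tm → Prop
    | mk (xs : List (ℕ × Ty)) (h : TTree) (b : Tm) :
        RepHead h b → RepLam (TTree.node (.lam xs) [h]) (Tm.lams xs b)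
  /-- `RepHead T t`: the head-rooted tree `T` represents the base-type term `t`. -/
  inductive RepHead : TTree → Tm → Prop
    | var (x : ℕ) (A : Ty) (cs : List TTree) (args : List Tm) :
        cs.length = args.length → (∀ p ∈ cs.zip args, RepLam p.1 p.2) →
        RepHead (TTree.node (.var x A) cs) (Tm.appArgs (Tm.var x A) args)
    | const (c : ℕ) (A : Ty) (cs : List TTree) (args : List Tm) :
        cs.length = args.length → (∀ p ∈ cs.zip args, RepLam p.1 p.2) →
        RepHead (TTree.node (.const c A) cs) (Tm.appArgs (Tm.const c A) args)
end

/-- The tree `T` is the tree representation (with dummy lambdas) of `t`. -/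
def Represents (T : TTree) (t : Tm) : Prop := RepLam T t

/-! ## Look-up tables -/

mutual
  /-- A `θ` look-up table: a partial map from variables of the term tree to
  triples `l ξ j`. -/
  inductive Theta : Type
    | mk : (ℕ → ThetaEntry) → Theta
  inductive ThetaEntry : Type
    | none : ThetaEntry
    | some : Tm → Xi → ℕ → ThetaEntry
  /-- A `ξ` look-up table: a partial map from variables of left terms to
  triples `t' θ j` (with `t'` a node of the term tree). -/
  inductive Xi : Type
    | mk : (ℕ → XiEntry) → Xi
  inductive XiEntry : Type
    | none : XiEntry
    | some : List ℕ → Theta → ℕ → XiEntry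
end

def Theta.fn : Theta → ℕ → ThetaEntry
  | .mk f => f

def Xi.fn : Xi → ℕ → XiEntry
  | .mk f => f

def Theta.look (θ : Theta) (y : ℕ) : Option (Tm × Xi × ℕ) :=
  match θ.fn y with
  | .none => none
  | .some l ξ j => some (l, ξ, j)

def Xi.look (ξ : Xi) (z : ℕ) : Option (List ℕ × Theta × ℕ) :=
  match ξ.fn z with
  | .none => none
  | .some t θ j => some (t, θ, j)

def Theta.empty : Theta := .mk fun _ => .none

def Xi.empty : Xi := .mk fun _ => .none

/-- Update a `θ` table with a list of new entries. -/
def Theta.updates (θ : Theta) (l : List (ℕ × (Tm × Xi × ℕ))) : Theta :=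
  .mk fun y =>
    match l.lookup y with
    | some v => .some v.1 v.2.1 v.2.2
    | none => θ.fn y

/-- Update a `ξ` table with a list of new entries. -/
def Xi.updates (ξ : Xi) (l : List (ℕ × (List ℕ × Theta × ℕ))) : Xi :=
  .mk fun z =>
    match l.lookup z with
    | some v => .some v.1 v.2.1 v.2.2
    | none => ξ.fn z

/-- `μ` extends `μ'`. -/
def Theta.Extends (θ θ' : Theta) : Prop := ∀ y v, θ'.look y = some v → θ.look y = some v

def Xi.Extends (ξ ξ' : Xi) : Prop := ∀ z v, ξ'.look z = some v → ξ.look z = some v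

/-! ## States and positions -/

inductive GState : Type
  | arg : List Tm → Tm → GState     -- argument state q[(l₁,…,lₖ), r]
  | val : Tm → Tm → GState          -- value state q[l, r]
  | emp : Tm → GState               -- empty state q[−, r]
  | finA : GState                   -- final state q[∀]
  | finE : GState                   -- final state q[∃]
  deriving DecidableEq

def GState.IsFinal : GState → Prop
  | .finA => True
  | .finE => True
  | _ => False

/-- The right term of a state. -/
def GState.rhs? : GState → Option Tm
  | .arg _ r => some r
  | .val _ r => some r
  | .emp r => some r
  | _ => none

/-- `λ…z…` occurs in a left term of the state. -/
def GState.BindsVar : GState → ℕ → Prop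
  | .val l _, z => l.bindsVar z
  | .arg ls _, z => ∃ l ∈ ls, l.bindsVar z
  | _, _ => False

/-- `z` occurs free in a left term of the state. -/
def GState.FreeVar : GState → ℕ → Prop
  | .val l _, z => l.freeName z
  | .arg ls _, z => ∃ l ∈ ls, l.freeName z
  | _, _ => False

/-- A position of the tree-checking game: a node of the term tree, a state and
the two look-up tables. -/
structure GPos : Type where
  node : List ℕ
  st : GState
  th : Theta
  xi : Xi

inductive MoveKind : Type
  | A1 | A2 | A3 | B1 | C1 | C2 | C3 | C4
  deriving DecidableEq

/-! ## The game moves (Figure 2) -/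

/-- Updates of `θ` at an A-move: the binders `xs` get the left terms `ls`
paired with `ξ` and the current position index `m`. -/
def aUpd (xs : List (ℕ × Ty)) (ls : List Tm) (ξ : Xi) (m : ℕ) :
    List (ℕ × (Tm × Xi × ℕ)) :=
  (xs.zip ls).map fun p => (p.1.1, (p.2, ξ, m))

/-- Updates of `ξ` at a C-move: the binders `zs` of the left term get the
successor nodes of `n` paired with `θ` and the current position index `m`. -/
def cUpd (n : List ℕ) (zs : List (ℕ × Ty)) (θ : Theta) (m : ℕ) :
    List (ℕ × (List ℕ × Theta × ℕ)) :=
  zs.zipIdx.map fun p => (p.1.1, (n ++ [p.2], θ, m))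

/-- The argument state produced when `∀` chooses the right subterm `s`
(moves B1 and C2): `q[(c_{i₁},…,c_{iₙ}), s{c̄/x̄}]`. -/
def argStateOf (fc : ℕ → ℕ) (s : Tm) : GState :=
  GState.arg ((s.stripLams.1).map fun p => Tm.const (fc p.1) p.2)
    (Tm.fsubst fc s.stripLams.1 s.stripLams.2)

/-- The value state produced at move C3 for the chosen `w` and `s`:
`q[w'{c̄/ȳ}, s{c̄/x̄}]`. -/
def valStateOf (fc : ℕ → ℕ) (w s : Tm) : GState :=
  GState.val (Tm.fsubstPaired fc w.stripLams.1 s.stripLams.1 w.stripLams.2)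
    (Tm.fsubst fc s.stripLams.1 s.stripLams.2)

/-- The moves of the tree-checking game (Figure 2 of the paper); `m` is the
index of the source position. -/
inductive GMove (T : TTree) (fc : ℕ → ℕ) (m : ℕ) : GPos → MoveKind → GPos → Prop
  | A1 (n : List ℕ) (xs : List (ℕ × Ty)) (ls : List Tm) (r : Tm)
      (θ : Theta) (ξ : Xi) (a : ℕ) :
      T.labelAt? n = some (.lam xs) → ls.length = xs.length →
      T.labelAt? (n ++ [0]) = some (.const a Ty.base) →
      GMove T fc m ⟨n, .arg ls r, θ, ξ⟩ .A1
        ⟨n ++ [0], if r = Tm.const a Ty.base then .finE else .finA,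
          θ.updates (aUpd xs ls ξ m), ξ⟩
  | A2 (n : List ℕ) (xs : List (ℕ × Ty)) (ls : List Tm) (r : Tm)
      (θ : Theta) (ξ : Xi) (f : ℕ) (A : Ty) (ss : List Tm) :
      T.labelAt? n = some (.lam xs) → ls.length = xs.length →
      T.labelAt? (n ++ [0]) = some (.const f A) → A ≠ Ty.base →
      r.headArgs = (Tm.const f A, ss) →
      GMove T fc m ⟨n, .arg ls r, θ, ξ⟩ .A2
        ⟨n ++ [0], .emp r, θ.updates (aUpd xs ls ξ m), ξ⟩
  | A2f (n : List ℕ) (xs : List (ℕ × Ty)) (ls : List Tm) (r : Tm)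
      (θ : Theta) (ξ : Xi) (f : ℕ) (A : Ty) :
      T.labelAt? n = some (.lam xs) → ls.length = xs.length →
      T.labelAt? (n ++ [0]) = some (.const f A) → A ≠ Ty.base →
      r.headArgs.1 ≠ Tm.const f A →
      GMove T fc m ⟨n, .arg ls r, θ, ξ⟩ .A2
        ⟨n ++ [0], .finA, θ.updates (aUpd xs ls ξ m), ξ⟩
  | A3 (n : List ℕ) (xs : List (ℕ × Ty)) (ls : List Tm) (r : Tm)
      (θ : Theta) (ξ ξ₀ : Xi) (y : ℕ) (B : Ty) (l : Tm) (i : ℕ) :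
      T.labelAt? n = some (.lam xs) → ls.length = xs.length →
      T.labelAt? (n ++ [0]) = some (.var y B) →
      (θ.updates (aUpd xs ls ξ m)).look y = some (l, ξ₀, i) →
      GMove T fc m ⟨n, .arg ls r, θ, ξ⟩ .A3
        ⟨n ++ [0], .val l r, θ.updates (aUpd xs ls ξ m), ξ₀⟩
  | B1 (n : List ℕ) (f : ℕ) (A : Ty) (r : Tm) (ss : List Tm)
      (θ : Theta) (ξ : Xi) (d : ℕ) (sd : Tm) :
      T.labelAt? n = some (.const f A) →
      r.headArgs = (Tm.const f A, ss) → ss[d]? = some sd →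
      GMove T fc m ⟨n, .emp r, θ, ξ⟩ .B1 ⟨n ++ [d], argStateOf fc sd, θ, ξ⟩
  | C1 (n : List ℕ) (y : ℕ) (B : Ty) (l r : Tm) (θ : Theta) (ξ : Xi) (a : ℕ) :
      T.labelAt? n = some (.var y B) →
      l.stripLams.2 = Tm.const a Ty.base →
      GMove T fc m ⟨n, .val l r, θ, ξ⟩ .C1
        ⟨n, if r = Tm.const a Ty.base then .finE else .finA, θ,
          ξ.updates (cUpd n l.stripLams.1 θ m)⟩
  | C2 (n : List ℕ) (y : ℕ) (B : Ty) (r : Tm) (θ : Theta) (ξ : Xi)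
      (c : ℕ) (A : Ty) (ss : List Tm) (d : ℕ) (sd : Tm) :
      T.labelAt? n = some (.var y B) → A ≠ Ty.base →
      r.headArgs = (Tm.const c A, ss) → ss[d]? = some sd →
      GMove T fc m ⟨n, .val (Tm.const c A) r, θ, ξ⟩ .C2
        ⟨n ++ [d], argStateOf fc sd, θ, ξ⟩
  | C2f (n : List ℕ) (y : ℕ) (B : Ty) (r : Tm) (θ : Theta) (ξ : Xi)
      (c : ℕ) (A : Ty) :
      T.labelAt? n = some (.var y B) → A ≠ Ty.base →
      r.headArgs.1 ≠ Tm.const c A →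
      GMove T fc m ⟨n, .val (Tm.const c A) r, θ, ξ⟩ .C2 ⟨n, .finA, θ, ξ⟩
  | C3 (n : List ℕ) (y : ℕ) (B : Ty) (l r : Tm) (θ : Theta) (ξ : Xi)
      (f : ℕ) (A : Ty) (ws ss : List Tm) (d : ℕ) (wd sd : Tm) :
      T.labelAt? n = some (.var y B) →
      (l.stripLams.2).headArgs = (Tm.const f A, ws) → ws ≠ [] →
      r.headArgs = (Tm.const f A, ss) → ws[d]? = some wd → ss[d]? = some sd →
      GMove T fc m ⟨n, .val l r, θ, ξ⟩ .C3
        ⟨n, valStateOf fc wd sd, θ, ξ.updates (cUpd n l.stripLams.1 θ m)⟩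
  | C3f (n : List ℕ) (y : ℕ) (B : Ty) (l r : Tm) (θ : Theta) (ξ : Xi)
      (f : ℕ) (A : Ty) (ws : List Tm) :
      T.labelAt? n = some (.var y B) →
      (l.stripLams.2).headArgs = (Tm.const f A, ws) → ws ≠ [] →
      r.headArgs.1 ≠ Tm.const f A →
      GMove T fc m ⟨n, .val l r, θ, ξ⟩ .C3
        ⟨n, .finA, θ, ξ.updates (cUpd n l.stripLams.1 θ m)⟩
  | C4 (n : List ℕ) (y : ℕ) (B : Ty) (l r : Tm) (θ θ₀ : Theta) (ξ : Xi)
      (x : ℕ) (C : Ty) (ws : List Tm) (n' : List ℕ) (i : ℕ) :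
      T.labelAt? n = some (.var y B) →
      (l.stripLams.2).headArgs = (Tm.var x C, ws) →
      (ξ.updates (cUpd n l.stripLams.1 θ m)).look x = some (n', θ₀, i) →
      GMove T fc m ⟨n, .val l r, θ, ξ⟩ .C4
        ⟨n', .arg ws r, θ₀, ξ.updates (cUpd n l.stripLams.1 θ m)⟩

/-! ## Plays of the tree-checking game -/

/-- A play of the game `G(t,P)`: a finite sequence of positions
`π(1),…,π(len)` starting at the root of the term tree with an initial state
chosen from a (dis)equation of `P`, proceeding by the game moves and ending at
the first final state.  `mv j` records which move produced position `j`. -/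
structure Play (T : TTree) (P : DIProblem) : Type where
  len : ℕ
  pos : ℕ → GPos
  mv : ℕ → MoveKind
  one_le : 1 ≤ len
  init_node : (pos 1).node = []
  init_th : (pos 1).th = Theta.empty
  init_xi : (pos 1).xi = Xi.empty
  init_st : ∃ e ∈ P.eqns, (pos 1).st = GState.arg e.args e.rhs
  steps : ∀ m, 1 ≤ m → m < len → GMove T P.fc m (pos m) (mv (m + 1)) (pos (m + 1))
  final_iff : ∀ m, 1 ≤ m → m ≤ len → ((pos m).st.IsFinal ↔ m = len)

namespace Play

variable {T : TTree} {P : DIProblem}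

/-- The sequence of positions of a play. -/
def trace (π : Play T P) : List GPos := (List.range π.len).map fun i => π.pos (i + 1)

/-- The refuter `∀` wins the play. -/
def AWins (π : Play T P) : Prop := (π.pos π.len).st = GState.finA

/-- The initial state of the play is the one given by the (dis)equation `e`. -/
def startsFrom (π : Play T P) (e : DIEqn) : Prop :=
  (π.pos 1).st = GState.arg e.args e.rhs

/-- `π.child j i`: position `π(j)` is a child of position `π(i)`
(Definition 4.10). -/
def child (π : Play T P) (j i : ℕ) : Prop :=
  i < j ∧ j < π.len ∧
  (((π.mv j = .A2 ∨ π.mv j = .B1 ∨ π.mv j = .C2 ∨ π.mv j = .C3) ∧ i = j - 1) ∨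
   (π.mv j = .A3 ∧ ∃ y B l ξ', T.labelAt? (π.pos j).node = some (.var y B) ∧
      (π.pos j).th.look y = some (l, ξ', i)) ∨
   (π.mv j = .C4 ∧ ∃ l r x C, (π.pos (j - 1)).st = GState.val l r ∧
      (l.stripLams.2).headArgs.1 = Tm.var x C ∧
      (π.pos j).xi.look x = some ((π.pos j).node, (π.pos j).th, i)))

/-- `π(j)` is a descendent of `π(i)`: the reflexive-transitive closure of the
child relation. -/
def desc (π : Play T P) : ℕ → ℕ → Prop := Relation.ReflTransGen π.child

/-- The interval `π(i,j)` is right-term invariant. -/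
def ri (π : Play T P) (i j : ℕ) : Prop :=
  ∃ r, (π.pos i).st.rhs? = some r ∧ (π.pos j).st.rhs? = some r

/-- The interval `π(i,j)` is nri: not ri, and `π(j)` is not final. -/
def nri (π : Play T P) (i j : ℕ) : Prop := ¬ π.ri i j ∧ ¬ (π.pos j).st.IsFinal

end Play

/-- Definition 4.5: the refuter `∀` loses the game `G(t,P)`. -/
def RefuterLoses (T : TTree) (P : DIProblem) : Prop :=
  (∀ e ∈ P.eqns, e.pos = true → ∀ π : Play T P, π.startsFrom e → ¬ π.AWins) ∧
  (∀ e ∈ P.eqns, e.pos = false → ∃ π : Play T P, π.startsFrom e ∧ π.AWins)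

/-- The number of (distinct) plays of the game `G(t,P)`. -/
noncomputable def numPlays (T : TTree) (P : DIProblem) : ℕ :=
  Nat.card { tr : List GPos // ∃ π : Play T P, π.trace = tr }

/-! ## Tiles -/

/-- The shape of a (composite) tile: for each atomic leaf of the root simple
tile, optionally a tile placed directly beneath it.  An occurrence of a tile in
a term tree is a pair of a path (the root head node) and a shape. -/
inductive Tile : Type
  | mk : List (Option Tile) → Tile

def Tile.subs : Tile → List (Option Tile)
  | .mk s => s

/-- The trivial simple-tile shape of a head node of a tree. -/
def TTree.simpleTile (t : TTree) : Tile := Tile.mk (List.replicate t.children.length none)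

/-- The tile occurrence `(p, τ)` is a valid region of the term tree `T`. -/
inductive TileValid (T : TTree) : List ℕ → Tile → Prop
  | mk (p : List ℕ) (subs : List (Option Tile)) (t' : TTree) :
      T.at? p = some t' → t'.label.isHeadLabel → subs.length = t'.children.length →
      (∀ i τ', subs[i]? = some (some τ') → TileValid T (p ++ [i, 0]) τ') →
      TileValid T p (.mk subs)

/-- The head nodes of a tile occurrence. -/
inductive TileHead (T : TTree) : List ℕ → Tile → List ℕ → Prop
  | root (p : List ℕ) (subs : List (Option Tile)) : TileHead T p (.mk subs) p
  | sub (p : List ℕ) (subs : List (Option Tile)) (i : ℕ) (τ' : Tile) (q : List ℕ) :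
      subs[i]? = some (some τ') → TileHead T (p ++ [i, 0]) τ' q →
      TileHead T p (.mk subs) q

/-- The λ-nodes of a tile occurrence. -/
inductive TileLam (T : TTree) : List ℕ → Tile → List ℕ → Prop
  | lam (p : List ℕ) (subs : List (Option Tile)) (i : ℕ) :
      i < subs.length → TileLam T p (.mk subs) (p ++ [i])
  | sub (p : List ℕ) (subs : List (Option Tile)) (i : ℕ) (τ' : Tile) (q : List ℕ) :
      subs[i]? = some (some τ') → TileLam T (p ++ [i, 0]) τ' q →
      TileLam T p (.mk subs) q

/-- The atomic leaves of a tile occurrence. -/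
inductive TileLeaf (T : TTree) : List ℕ → Tile → List ℕ → Prop
  | leaf (p : List ℕ) (subs : List (Option Tile)) (i : ℕ) :
      subs[i]? = some none → TileLeaf T p (.mk subs) (p ++ [i])
  | sub (p : List ℕ) (subs : List (Option Tile)) (i : ℕ) (τ' : Tile) (q : List ℕ) :
      subs[i]? = some (some τ') → TileLeaf T (p ++ [i, 0]) τ' q →
      TileLeaf T p (.mk subs) q

/-- All nodes of a tile occurrence. -/
def TileNodeAll (T : TTree) (p : List ℕ) (τ : Tile) (q : List ℕ) : Prop :=
  TileHead T p τ q ∨ TileLam T p τ q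

/-- `y` is bound by some λ-node of the tile. -/
def TileBindsName (T : TTree) (p : List ℕ) (τ : Tile) (y : ℕ) : Prop :=
  ∃ q xs, TileLam T p τ q ∧ T.labelAt? q = some (.lam xs) ∧ y ∈ xs.map Prod.fst

/-- There is an occurrence, at node `q` of the tile, of the variable `y` free
in the tile. -/
def TileFreeVarAt (T : TTree) (p : List ℕ) (τ : Tile) (q : List ℕ) (y : ℕ) : Prop :=
  TileHead T p τ q ∧ (∃ A, T.labelAt? q = some (.var y A)) ∧
  ∀ t', T.at? p = some t' → y ∉ t'.bindersAlong (q.drop p.length)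

/-- There is an occurrence, at node `q` of the tile, of the constant `c`. -/
def TileConstAt (T : TTree) (p : List ℕ) (τ : Tile) (q : List ℕ) (c : ℕ) : Prop :=
  TileHead T p τ q ∧ ∃ A, T.labelAt? q = some (.const c A)

/-- A basic tile: exactly one occurrence of a free variable and no constants,
or exactly one occurrence of a constant and no free variables. -/
def BasicTile (T : TTree) (p : List ℕ) (τ : Tile) : Prop :=
  TileValid T p τ ∧
    (((∃! q : List ℕ, ∃ y : ℕ, TileFreeVarAt T p τ q y) ∧
        ¬ ∃ q c, TileConstAt T p τ q c) ∨
     ((∃! q : List ℕ, ∃ c : ℕ, TileConstAt T p τ q c) ∧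
        ¬ ∃ q y, TileFreeVarAt T p τ q y))

/-- A top tile: a basic tile with a free variable occurrence bound by the
initial λ of the term tree. -/
def TopTile (T : TTree) (p : List ℕ) (τ : Tile) : Prop :=
  BasicTile T p τ ∧ ∃ q y xs, TileFreeVarAt T p τ q y ∧
    T.label = TLabel.lam xs ∧ y ∈ xs.map Prod.fst

/-- `γ` (rooted at `pγ`) is below the atomic leaf `q` of `τ`: there is a path
of successors from `q` to `pγ`. -/
def TileBelowAt (T : TTree) (p : List ℕ) (τ : Tile) (q pγ : List ℕ) : Prop :=
  TileLeaf T p τ q ∧ q <+: pγ ∧ q ≠ pγ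

/-- `γ` is an immediate dependent of `τ` below the atomic leaf `q` of `τ`:
it is below `q` and contains a free variable bound in `τ`. -/
def ImmDependentAt (T : TTree) (p : List ℕ) (τ : Tile) (q pγ : List ℕ) (γ : Tile) :
    Prop :=
  BasicTile T pγ γ ∧ TileBelowAt T p τ q pγ ∧
  ∃ q' y, TileFreeVarAt T pγ γ q' y ∧ TileBindsName T p τ y

/-- `γ` is a dependent of `τ` below the atomic leaf `q` of `τ`. -/
inductive DependentAt (T : TTree) : List ℕ → Tile → List ℕ → List ℕ → Tile → Prop
  | imm (p : List ℕ) (τ : Tile) (q pγ : List ℕ) (γ : Tile) :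
      ImmDependentAt T p τ q pγ γ → DependentAt T p τ q pγ γ
  | trans (p : List ℕ) (τ : Tile) (q p' : List ℕ) (τ' : Tile) (q' pγ : List ℕ)
      (γ : Tile) :
      ImmDependentAt T p τ q p' τ' → DependentAt T p' τ' q' pγ γ →
      DependentAt T p τ q pγ γ

/-- `γ` is a dependent of `τ`. -/
def Dependent (T : TTree) (p : List ℕ) (τ : Tile) (pγ : List ℕ) (γ : Tile) : Prop :=
  ∃ q, DependentAt T p τ q pγ γ

/-- Two tiles belong to the same family. -/
def SameFamily (T : TTree) (p₁ : List ℕ) (τ₁ : Tile) (p₂ : List ℕ) (τ₂ : Tile) : Prop :=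
  Dependent T p₁ τ₁ p₂ τ₂ ∨ Dependent T p₂ τ₂ p₁ τ₁ ∨
  ∃ p' τ', Dependent T p' τ' p₁ τ₁ ∧ Dependent T p' τ' p₂ τ₂

/-- `τ₂` is in the family of tiles associated with `τ₁`. -/
def InFamily (T : TTree) (p₁ : List ℕ) (τ₁ : Tile) (p₂ : List ℕ) (τ₂ : Tile) : Prop :=
  (p₁ = p₂ ∧ τ₁ = τ₂) ∨ SameFamily T p₁ τ₁ p₂ τ₂

/-- `τ` is end at its atomic leaf `q` (j-end): it has no immediate dependents
below `q`. -/
def EndAt (T : TTree) (p : List ℕ) (τ : Tile) (q : List ℕ) : Prop :=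
  TileLeaf T p τ q ∧ ¬ ∃ pγ γ, ImmDependentAt T p τ q pγ γ

/-- An end tile: end at every atomic leaf. -/
def EndTile (T : TTree) (p : List ℕ) (τ : Tile) : Prop :=
  ∀ q, TileLeaf T p τ q → EndAt T p τ q

/-- A constant tile: it contains an occurrence of a constant, or is a
dependent of a constant tile. -/
inductive ConstTile (T : TTree) : List ℕ → Tile → Prop
  | base (p : List ℕ) (τ : Tile) :
      (∃ q c, TileConstAt T p τ q c) → ConstTile T p τ
  | dep (p : List ℕ) (τ : Tile) (p' : List ℕ) (τ' : Tile) :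
      ConstTile T p' τ' → Dependent T p' τ' p τ → ConstTile T p τ

/-- Renaming of labels: bound variables are renamed by `ρ`, the free variable
and the constants are kept. -/
def LabelRen (ρ : ℕ → ℕ) (bound : ℕ → Prop) : TLabel → TLabel → Prop
  | .lam xs, .lam ys => ys = xs.map fun p => (ρ p.1, p.2)
  | .var x A, .var x' A' => A = A' ∧ ((bound x ∧ x' = ρ x) ∨ (¬ bound x ∧ x' = x))
  | .const c A, .const c' A' => c = c' ∧ A = A'
  | _, _ => False

/-- Tile equivalence `τ ≡ γ` (α-equivalence of basic tiles with the same single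
free variable occurrence); corresponding nodes are at the same relative
paths. -/
def TileEquiv (T : TTree) (p : List ℕ) (τ : Tile) (p' : List ℕ) (γ : Tile) : Prop :=
  BasicTile T p τ ∧ BasicTile T p' γ ∧ τ = γ ∧
  ∃ ρ : ℕ → ℕ,
    ∀ q l l', TileNodeAll T p τ q → T.labelAt? q = some l →
      T.labelAt? (p' ++ q.drop p.length) = some l' →
      LabelRen ρ (TileBindsName T p τ) l l'

/-! ## Plays on tiles -/

namespace Play

variable {T : TTree} {P : DIProblem}

/-- `π(i,j)` is a play on the tile occurrence `(p, τ)` ending at its atomic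
leaf `q`, decomposed as the list `cuts` of consecutive plays `(iₗ, jₗ)` on the
simple tiles along the branch of `τ` from its root to `q`. -/
inductive TilePlayCuts (π : Play T P) :
    List ℕ → Tile → List (ℕ × ℕ) → List ℕ → Prop
  | simple (p : List ℕ) (subs : List (Option Tile)) (d i j : ℕ) :
      subs[d]? = some none → (π.pos i).node = p → (π.pos j).node = p ++ [d] →
      π.child j i → TilePlayCuts π p (.mk subs) [(i, j)] (p ++ [d])
  | step (p : List ℕ) (subs : List (Option Tile)) (d i j j₂ : ℕ)
      (cuts : List (ℕ × ℕ)) (q : List ℕ) (τ' : Tile) :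
      subs[d]? = some (some τ') → (π.pos i).node = p →
      (π.pos j).node = p ++ [d] → π.child j i →
      TilePlayCuts π (p ++ [d, 0]) τ' ((j + 1, j₂) :: cuts) q →
      TilePlayCuts π p (.mk subs) ((i, j) :: (j + 1, j₂) :: cuts) q

/-- `π(i,j)` is a play on the tile occurrence `(p, τ)` ending at its atomic
leaf `q`. -/
def TilePlayOn (π : Play T P) (p : List ℕ) (τ : Tile) (i j : ℕ) (q : List ℕ) :
    Prop :=
  ∃ cuts x y, π.TilePlayCuts p τ cuts q ∧ cuts.head? = some x ∧ x.1 = i ∧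
    cuts.getLast? = some y ∧ y.2 = j

/-- A shortest play on `(p, τ)` ending at the leaf `q` (no proper prefix is a
play on `τ` ending at `q`). -/
def ShortestLeafPlay (π : Play T P) (p : List ℕ) (τ : Tile) (i j : ℕ)
    (q : List ℕ) : Prop :=
  π.TilePlayOn p τ i j q ∧ ∀ k, k < j → ¬ π.TilePlayOn p τ i k q

/-- A shortest play on `(p, τ)` (no proper prefix is a play on `τ`). -/
def ShortestPlay (π : Play T P) (p : List ℕ) (τ : Tile) (i j : ℕ) : Prop :=
  (∃ q, π.TilePlayOn p τ i j q) ∧ ∀ k, k < j → ¬ ∃ q, π.TilePlayOn p τ i k q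

/-- The interval `π(i,j)` is internal to the tile `(p, τ)`. -/
def InternalOn (π : Play T P) (p : List ℕ) (τ : Tile) (i j : ℕ) : Prop :=
  ∀ n, i ≤ n → n ≤ j → TileNodeAll T p τ (π.pos n).node

end Play

/-- `τ` is directed towards its atomic leaf `q` (j-directed) with respect to
the interval `π(i,|π|)` (Definition 5.18). -/
inductive DirectedFrom {T : TTree} {P : DIProblem} (π : Play T P)
    (p : List ℕ) (τ : Tile) (q : List ℕ) : ℕ → Prop
  | none (i : ℕ) :
      (∀ m, i ≤ m → m ≤ π.len → (π.pos m).node ≠ p) → DirectedFrom π p τ q i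
  | step (i m n : ℕ) :
      i ≤ m → (π.pos m).node = p →
      (∀ m', i ≤ m' → m' < m → (π.pos m').node ≠ p) →
      π.ShortestLeafPlay p τ m n q → π.ri m n →
      DirectedFrom π p τ q (n + 1) → DirectedFrom π p τ q i

/-- `τ` is directed towards its atomic leaf `q` (j-directed) with respect to
the game `G(t,P)`. -/
def DirectedWrtGame (T : TTree) (P : DIProblem) (p : List ℕ) (τ : Tile)
    (q : List ℕ) : Prop :=
  ∀ π : Play T P, DirectedFrom π p τ q 1

/-! ## b-partitions, variation and correspondence -/

namespace Play

variable {T : TTree} {P : DIProblem}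

/-- The b-partition for the position `π(j)` at a λ-node (Definition 6.14):
`js = [j₀, j₁, …, jₙ]` with `j₀ = 1`, `jₙ = j` and, for each `m`, the interval
`π(jₘ₋₁ + 1, jₘ)` is a play on the `m`-th simple tile along the branch from the
root of the term tree to the node of `π(j)`, ending at the `m`-th λ-node of
that branch. -/
def IsBPartition (π : Play T P) (j : ℕ) (js : List ℕ) : Prop :=
  js.length = (π.pos j).node.length / 2 + 1 ∧ js[0]? = some 1 ∧
  js[(π.pos j).node.length / 2]? = some j ∧
  ∀ m, 1 ≤ m → m ≤ (π.pos j).node.length / 2 →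
    ∀ a b, js[m - 1]? = some a → js[m]? = some b →
      (π.pos (a + 1)).node = (π.pos j).node.take (2 * m - 1) ∧
      (π.pos b).node = (π.pos j).node.take (2 * m) ∧ π.child b (a + 1)

/-- Positions `π(j)`, `π(j')` vary at `π(jk)`, `π(j'k)` with the simple tile
rooted at the path `pτ` (Definition 8.4): they are at the same λ-node and `pτ`
is the head of the first simple tile in their b-partitions at which the two
plays differ. -/
def VaryAt (π : Play T P) (j j' jk j'k : ℕ) (pτ : List ℕ) : Prop :=
  (π.pos j).node = (π.pos j').node ∧ j ≠ j' ∧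
  ∃ js js' k, π.IsBPartition j js ∧ π.IsBPartition j' js' ∧ 1 ≤ k ∧
    (∀ m, m < k → js[m]? = js'[m]?) ∧
    js[k]? = some jk ∧ js'[k]? = some j'k ∧ jk ≠ j'k ∧
    pτ = (π.pos j).node.take (2 * k - 1)

/-- The intervals `π(i,j)` and `π(i',j')` correspond (Definition 8.3): they
have the same length, visit the same nodes and have states of the same kind
with the same left terms (the right terms may differ). -/
def corr (π : Play T P) (i j i' j' : ℕ) : Prop :=
  j < π.len ∧ j' < π.len ∧ i ≤ j ∧ i' ≤ j' ∧ j - i = j' - i' ∧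
  ∀ k, k ≤ j - i →
    (π.pos (i + k)).node = (π.pos (i' + k)).node ∧
    (∀ l r, (π.pos (i + k)).st = GState.val l r →
      ∃ r', (π.pos (i' + k)).st = GState.val l r') ∧
    (∀ ls r, (π.pos (i + k)).st = GState.arg ls r →
      ∃ r', (π.pos (i' + k)).st = GState.arg ls r') ∧
    (∀ r, (π.pos (i + k)).st = GState.emp r →
      ∃ r', (π.pos (i' + k)).st = GState.emp r')

end Play

/-- No simple tile headed by an occurrence of the variable `y` is a dependent
of the tile `(pτ, τ)`. -/
def NotDependentHead (T : TTree) (pτ : List ℕ) (τ : Tile) (y : ℕ) : Prop :=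
  ∀ q A t', T.labelAt? q = some (TLabel.var y A) → T.at? q = some t' →
    ¬ Dependent T pτ τ q t'.simpleTile

mutual
  /-- Look-up tables `n`-similar except for the tile `(pτ, τ)`
  (Definition 8.6). -/
  def ThetaSim (T : TTree) (pτ : List ℕ) (τ : Tile) : ℕ → Theta → Theta → Prop
    | 0, θ, θ' => θ = θ'
    | n + 1, θ, θ' =>
        (∀ y, (θ.look y).isSome = (θ'.look y).isSome) ∧
        (∀ y l ξ i, NotDependentHead T pτ τ y → θ.look y = some (l, ξ, i) →
          ∃ ξ' i', θ'.look y = some (l, ξ', i') ∧ XiSim T pτ τ n ξ ξ')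
  def XiSim (T : TTree) (pτ : List ℕ) (τ : Tile) : ℕ → Xi → Xi → Prop
    | 0, ξ, ξ' => ξ = ξ'
    | n + 1, ξ, ξ' =>
        (∀ z, (ξ.look z).isSome = (ξ'.look z).isSome) ∧
        (∀ z t θ i, ξ.look z = some (t, θ, i) →
          ∃ θ' i', ξ'.look z = some (t, θ', i') ∧ ThetaSim T pτ τ n θ θ')
end

/-- Look-up tables similar except for the tile `(pτ, τ)`: `θ ∼τ θ'`. -/
def ThetaSimA (T : TTree) (pτ : List ℕ) (τ : Tile) (θ θ' : Theta) : Prop :=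
  ∃ n, ThetaSim T pτ τ n θ θ'

/-! ## The transformations T1 and T2 -/

/-- Replace the subtree at a path. -/
def TTree.replaceAt : TTree → List ℕ → TTree → TTree
  | _, [], u => u
  | .node l cs, i :: p, u =>
      .node l (cs.mapIdx fun j c => if j = i then TTree.replaceAt c p u else c)

/-- The game `G(t,P)` avoids the subtree at path `p`. -/
def AvoidedBy (T : TTree) (P : DIProblem) (p : List ℕ) : Prop :=
  ∀ π : Play T P, ∀ i, 1 ≤ i → i ≤ π.len → (π.pos i).node ≠ p

/-- Transformation T1: if every play avoids the subtree rooted at `p` (whose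
root is labelled with a variable or a higher-order constant), replace it by a
single node labelled with a fresh base-type constant `d`. -/
def T1Rel (P : DIProblem) (T T' : TTree) : Prop :=
  ∃ (p : List ℕ) (t' : TTree) (d : ℕ),
    T.at? p = some t' ∧
    ((∃ y B, t'.label = TLabel.var y B) ∨
      (∃ f B, t'.label = TLabel.const f B ∧ B ≠ Ty.base)) ∧
    AvoidedBy T P p ∧
    d ∉ P.forb ∧ (∀ e ∈ P.eqns, d ∉ e.rhs.consts) ∧
    T' = T.replaceAt p (TTree.node (TLabel.const d Ty.base) [])

/-- Transformation T2: if the basic tile `(p, τ)` is end at its atomic leaf `q`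
and directed towards `q` with respect to the game, replace the subtree rooted
at `τ` by the subtree directly beneath `q`. -/
def T2Rel (P : DIProblem) (T T' : TTree) : Prop :=
  ∃ (p q : List ℕ) (τ : Tile) (sub : TTree),
    BasicTile T p τ ∧ EndAt T p τ q ∧ DirectedWrtGame T P p τ q ∧
    T.at? (q ++ [0]) = some sub ∧
    T' = T.replaceAt p sub

/-- `T` (as a tree) solves `P`: it represents a term `t` with `t ⊨ P`. -/
def TSolves (P : DIProblem) (T : TTree) : Prop := ∃ t, Represents T t ∧ Solves P t

/-! ## Size measures -/

/-- A head node with at least one successor: a simple tile with atomic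
leaves. -/
def TTree.headWithChildren : TTree → Bool
  | .node (.lam _) _ => false
  | .node _ [] => false
  | .node _ (_ :: _) => true

/-- The number of simple tiles with atomic leaves along a path. -/
def TTree.tilesOnPath : TTree → List ℕ → ℕ
  | t, [] => if t.headWithChildren then 1 else 0
  | t, i :: p =>
      (if t.headWithChildren then 1 else 0) +
      match t.children[i]? with
      | some c => TTree.tilesOnPath c p
      | none => 0

/-- `|t|`: the number of simple tiles with atomic leaves in a longest branch. -/
noncomputable def TTree.branchTilesMax (T : TTree) : ℕ :=
  sSup { n : ℕ | ∃ p : List ℕ, (T.at? p).isSome = true ∧ TTree.tilesOnPath T p = n }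

/-- `‖t‖`: the total number of simple tiles with atomic leaves. -/
noncomputable def TTree.totalTiles (T : TTree) : ℕ :=
  Nat.card { p : List ℕ // ∃ t', T.at? p = some t' ∧ t'.headWithChildren = true }

/-- A top simple tile: a simple tile whose head variable is bound by the
initial λ of the term tree. -/
def IsTopSimpleTile (T : TTree) (p : List ℕ) : Prop :=
  ∃ t' y A xs, T.at? p = some t' ∧ t'.label = TLabel.var y A ∧
    t'.children ≠ [] ∧ T.label = TLabel.lam xs ∧ y ∈ xs.map Prod.fst

/-- The tower function of Theorem 9.3: `g 1 = 1` and `g (k+1) = (α+1)^(g k)`. -/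
def gfun (α : ℕ) : ℕ → ℕ
  | 0 => 1
  | 1 => 1
  | k + 2 => (α + 1) ^ gfun α (k + 1)


/-! ### Auxiliary development for Statement 10 -/

namespace St10

/-! #### Look-up table lemmas -/

theorem theta_look_empty (y : ℕ) : Theta.empty.look y = none := rfl

theorem xi_look_empty (z : ℕ) : Xi.empty.look z = none := rfl

theorem theta_look_updates (θ : Theta) (L : List (ℕ × (Tm × Xi × ℕ))) (y : ℕ) :
    (θ.updates L).look y = (match L.lookup y with
      | some v => some v
      | none => θ.look y) := by
  cases θ with
  | mk f =>
    show (match (match L.lookup y with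
      | some v => ThetaEntry.some v.1 v.2.1 v.2.2
      | none => f y) with
      | ThetaEntry.none => none
      | ThetaEntry.some l ξ j => some (l, ξ, j)) = _
    cases h : L.lookup y with
    | none => rfl
    | some v => rfl

theorem xi_look_updates (ξ : Xi) (L : List (ℕ × (List ℕ × Theta × ℕ))) (z : ℕ) :
    (ξ.updates L).look z = (match L.lookup z with
      | some v => some v
      | none => ξ.look z) := by
  cases ξ with
  | mk f =>
    show (match (match L.lookup z with
      | some v => XiEntry.some v.1 v.2.1 v.2.2
      | none => f z) with
      | XiEntry.none => none
      | XiEntry.some t θ j => some (t, θ, j)) = _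
    cases h : L.lookup z with
    | none => rfl
    | some v => rfl

theorem theta_look_updates_cases {θ : Theta} {L : List (ℕ × (Tm × Xi × ℕ))} {y : ℕ}
    {v : Tm × Xi × ℕ} (h : (θ.updates L).look y = some v) :
    L.lookup y = some v ∨ (L.lookup y = none ∧ θ.look y = some v) := by
  rw [theta_look_updates] at h
  cases hL : L.lookup y with
  | none => rw [hL] at h; exact Or.inr ⟨rfl, h⟩
  | some w => rw [hL] at h; exact Or.inl (by rw [Option.some_inj] at h; rw [h])

theorem xi_look_updates_cases {ξ : Xi} {L : List (ℕ × (List ℕ × Theta × ℕ))} {z : ℕ}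
    {v : List ℕ × Theta × ℕ} (h : (ξ.updates L).look z = some v) :
    L.lookup z = some v ∨ (L.lookup z = none ∧ ξ.look z = some v) := by
  rw [xi_look_updates] at h
  cases hL : L.lookup z with
  | none => rw [hL] at h; exact Or.inr ⟨rfl, h⟩
  | some w => rw [hL] at h; exact Or.inl (by rw [Option.some_inj] at h; rw [h])

theorem lookup_mem {α β : Type} [BEq α] {L : List (α × β)} {a : α} {b : β}
    (h : List.lookup a L = some b) : ∃ x : α × β, x ∈ L ∧ x.2 = b := by
  induction L with
  | nil => simp [List.lookup] at h
  | cons hd tl ih =>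
    cases hd with
    | mk k v =>
      rw [List.lookup] at h
      by_cases hk : a == k
      · simp only [hk] at h
        refine ⟨(k, v), List.mem_cons_self .., ?_⟩
        simpa using h
      · simp only [Bool.of_not_eq_true hk] at h
        obtain ⟨x, hx, hxb⟩ := ih h
        exact ⟨x, List.mem_cons_of_mem _ hx, hxb⟩

/-- Structure of a value looked up in an `aUpd` list. -/
theorem aUpd_lookup_struct {xs : List (ℕ × Ty)} {ls : List Tm} {ξ : Xi} {w : ℕ}
    {y : ℕ} {v : Tm × Xi × ℕ} (h : List.lookup y (aUpd xs ls ξ w) = some v) :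
    v.2.1 = ξ ∧ v.2.2 = w ∧ v.1 ∈ ls := by
  obtain ⟨x, hx, hxv⟩ := lookup_mem h
  unfold aUpd at hx
  obtain ⟨pq, hpq, hpx⟩ := List.mem_map.mp hx
  subst hxv
  rw [← hpx]
  exact ⟨rfl, rfl, List.of_mem_zip hpq |>.2⟩

/-- Structure of a value looked up in a `cUpd` list. -/
theorem cUpd_lookup_struct {n : List ℕ} {zs : List (ℕ × Ty)} {θ : Theta} {w : ℕ}
    {z : ℕ} {v : List ℕ × Theta × ℕ} (h : List.lookup z (cUpd n zs θ w) = some v) :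
    v.2.1 = θ ∧ v.2.2 = w ∧ ∃ d, v.1 = n ++ [d] := by
  obtain ⟨x, hx, hxv⟩ := lookup_mem h
  unfold cUpd at hx
  obtain ⟨pq, hpq, hpx⟩ := List.mem_map.mp hx
  subst hxv
  rw [← hpx]
  exact ⟨rfl, rfl, pq.2, rfl⟩

/-! #### Occurrence of a variable name in a term -/

def occursName : Tm → ℕ → Prop
  | .var y _, x => y = x
  | .const _ _, _ => False
  | .lam _ _ t, x => occursName t x
  | .app s t, x => occursName s x ∨ occursName t x

theorem occurs_stripLams {t : Tm} {x : ℕ} (h : occursName t.stripLams.2 x) :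
    occursName t x := by
  induction t with
  | var y A => exact h
  | const c A => exact h
  | lam y A u ih => exact ih h
  | app s u ih ih' => exact h

theorem occurs_headArgs_head {t : Tm} {x : ℕ} {C : Ty}
    (h : t.headArgs.1 = Tm.var x C) : occursName t x := by
  induction t with
  | var y A =>
    have h2 : Tm.var y A = Tm.var x C := h
    have : y = x := by injection h2
    exact this
  | const c A => exact absurd (show Tm.const c A = Tm.var x C from h) (by simp)
  | lam y A u ih => exact absurd (show Tm.lam y A u = Tm.var x C from h) (by simp)
  | app s u ih ih' => exact Or.inl (ih h)

theorem occurs_headArgs_arg {t u : Tm} {x : ℕ}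
    (hu : u ∈ t.headArgs.2) (h : occursName u x) : occursName t x := by
  induction t with
  | var y A => simp [Tm.headArgs] at hu
  | const c A => simp [Tm.headArgs] at hu
  | lam y A v ih => simp [Tm.headArgs] at hu
  | app s v ih ih' =>
    unfold Tm.headArgs at hu
    rcases List.mem_append.mp hu with h1 | h2
    · exact Or.inl (ih h1)
    · rw [List.mem_singleton] at h2; subst h2; exact Or.inr h

theorem occurs_subst_const {y : ℕ} {A : Ty} {c : ℕ} {B : Ty} {t : Tm} {x : ℕ}
    (h : occursName (Tm.subst y A (Tm.const c B) t) x) : occursName t x := by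
  induction t with
  | var z D =>
    unfold Tm.subst at h
    split at h
    · exact absurd h (by simp [occursName])
    · exact h
  | const d D => exact h
  | lam z D u ih =>
    unfold Tm.subst at h
    split at h
    · exact h
    · exact ih h
  | app s u ih ih' =>
    rcases h with h | h
    · exact Or.inl (ih h)
    · exact Or.inr (ih' h)

theorem occurs_fsubst {fc : ℕ → ℕ} {xs : List (ℕ × Ty)} {t : Tm} {x : ℕ}
    (h : occursName (Tm.fsubst fc xs t) x) : occursName t x := by
  unfold Tm.fsubst at h
  induction xs generalizing t with
  | nil => exact h
  | cons hd tl ih =>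
    rw [List.foldl_cons] at h
    exact occurs_subst_const (ih h)

theorem occurs_fsubstPaired {fc : ℕ → ℕ} {ys xs : List (ℕ × Ty)} {t : Tm} {x : ℕ}
    (h : occursName (Tm.fsubstPaired fc ys xs t) x) : occursName t x := by
  unfold Tm.fsubstPaired at h
  generalize hL : ys.zip xs = L at h
  clear hL
  induction L generalizing t with
  | nil => exact h
  | cons hd tl ih =>
    rw [List.foldl_cons] at h
    exact occurs_subst_const (ih h)

theorem occurs_const_false {c : ℕ} {A : Ty} {x : ℕ}
    (h : occursName (Tm.const c A) x) : False := h


/-! #### Resolution-safety (`benign`) -/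

def benign (i m : ℕ) (l : Tm) (ξ : Xi) : Prop :=
  ∀ x, occursName l x → ∀ n' θ' k, ξ.look x = some (n', θ', k) → k < i ∨ m < k

theorem benign_of_occurs_subset {i m : ℕ} {l l' : Tm} {ξ : Xi}
    (hocc : ∀ x, occursName l' x → occursName l x) (h : benign i m l ξ) :
    benign i m l' ξ := fun x hx => h x (hocc x hx)

theorem benign_updates_cUpd {i m : ℕ} {l : Tm} {ξ : Xi} {n : List ℕ}
    {zs : List (ℕ × Ty)} {θ : Theta} {w : ℕ} (hw : m < w)
    (h : benign i m l ξ) : benign i m l (ξ.updates (cUpd n zs θ w)) := by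
  intro x hx n' θ' k hk
  rcases xi_look_updates_cases hk with h1 | h1
  · obtain ⟨-, h2, -⟩ := cUpd_lookup_struct h1
    exact Or.inr (by simp only at h2; omega)
  · exact h x hx n' θ' k h1.2

theorem benign_const {i m : ℕ} {c : ℕ} {A : Ty} {ξ : Xi} :
    benign i m (Tm.const c A) ξ := fun x hx => absurd hx occurs_const_false

/-! #### Provenance of look-up table entries -/

mutual
inductive GoodT {T : TTree} {P : DIProblem} (π : Play T P) : ℕ → Theta → Prop
  | mk (w : ℕ) (θ : Theta)
      (hfacts : ∀ y l ξ₀ k, θ.look y = some (l, ξ₀, k) →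
        1 ≤ k ∧ k < w ∧ (∃ xs, T.labelAt? ((π.pos k).node) = some (.lam xs)) ∧
        ξ₀ = (π.pos k).xi)
      (hrec : ∀ y l ξ₀ k, θ.look y = some (l, ξ₀, k) → GoodX π k ξ₀) : GoodT π w θ
inductive GoodX {T : TTree} {P : DIProblem} (π : Play T P) : ℕ → Xi → Prop
  | mk (w : ℕ) (ξ : Xi)
      (hfacts : ∀ z n' θ' k, ξ.look z = some (n', θ', k) →
        1 ≤ k ∧ k < w ∧ θ' = (π.pos k).th ∧ (∃ d, n' = (π.pos k).node ++ [d]) ∧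
        (∃ l r, (π.pos k).st = GState.val l r))
      (hrec : ∀ z n' θ' k, ξ.look z = some (n', θ', k) → GoodT π k θ') : GoodX π w ξ
end

section Prov

variable {T : TTree} {P : DIProblem} {π : Play T P}

theorem goodT_elim {w : ℕ} {θ : Theta} (h : GoodT π w θ) {y : ℕ} {l : Tm} {ξ₀ : Xi}
    {k : ℕ} (hk : θ.look y = some (l, ξ₀, k)) :
    1 ≤ k ∧ k < w ∧ (∃ xs, T.labelAt? ((π.pos k).node) = some (.lam xs)) ∧
    ξ₀ = (π.pos k).xi ∧ GoodX π k ξ₀ := by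
  cases h with | mk _ _ hf hr =>
    obtain ⟨a, b, c, d⟩ := hf y l ξ₀ k hk
    exact ⟨a, b, c, d, hr y l ξ₀ k hk⟩

theorem goodX_elim {w : ℕ} {ξ : Xi} (h : GoodX π w ξ) {z : ℕ} {n' : List ℕ}
    {θ' : Theta} {k : ℕ} (hk : ξ.look z = some (n', θ', k)) :
    1 ≤ k ∧ k < w ∧ θ' = (π.pos k).th ∧ (∃ d, n' = (π.pos k).node ++ [d]) ∧
    (∃ l r, (π.pos k).st = GState.val l r) ∧ GoodT π k θ' := by
  cases h with | mk _ _ hf hr =>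
    obtain ⟨a, b, c, d, e⟩ := hf z n' θ' k hk
    exact ⟨a, b, c, d, e, hr z n' θ' k hk⟩

theorem goodT_mono {w w' : ℕ} {θ : Theta} (h : GoodT π w θ) (hw : w ≤ w') :
    GoodT π w' θ := by
  refine GoodT.mk _ _ (fun y l ξ₀ k hk => ?_) (fun y l ξ₀ k hk => (goodT_elim h hk).2.2.2.2)
  obtain ⟨h1, h2, h3, h4, h5⟩ := goodT_elim h hk
  exact ⟨h1, by omega, h3, h4⟩

theorem goodX_mono {w w' : ℕ} {ξ : Xi} (h : GoodX π w ξ) (hw : w ≤ w') :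
    GoodX π w' ξ := by
  refine GoodX.mk _ _ (fun z n' θ' k hk => ?_) (fun z n' θ' k hk => (goodX_elim h hk).2.2.2.2.2)
  obtain ⟨h1, h2, h3, h4, h5, h6⟩ := goodX_elim h hk
  exact ⟨h1, by omega, h3, h4, h5⟩

theorem goodT_updates_aUpd {w : ℕ} {θ : Theta} {ξ : Xi} {xs : List (ℕ × Ty)}
    {ls : List Tm}
    (hT : GoodT π w θ) (hX : GoodX π w ξ) (hξ : ξ = (π.pos w).xi)
    (hlab : T.labelAt? ((π.pos w).node) = some (.lam xs)) (h1 : 1 ≤ w) :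
    GoodT π (w + 1) (θ.updates (aUpd xs ls ξ w)) := by
  refine GoodT.mk _ _ (fun y l ξ₀ k hk => ?_) (fun y l ξ₀ k hk => ?_) <;>
    rcases theta_look_updates_cases hk with h | h
  · obtain ⟨he1, he2, he3⟩ := aUpd_lookup_struct h
    simp only at he1 he2 he3
    subst he1; subst he2
    exact ⟨h1, by omega, ⟨xs, hlab⟩, hξ⟩
  · obtain ⟨g1, g2, g3, g4, g5⟩ := goodT_elim hT h.2
    exact ⟨g1, by omega, g3, g4⟩
  · obtain ⟨he1, he2, he3⟩ := aUpd_lookup_struct h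
    simp only at he1 he2 he3
    subst he1; subst he2
    exact hξ ▸ hX
  · exact (goodT_elim hT h.2).2.2.2.2

theorem goodX_updates_cUpd {w : ℕ} {ξ : Xi} {θ : Theta} {n : List ℕ}
    {zs : List (ℕ × Ty)}
    (hX : GoodX π w ξ) (hT : GoodT π w θ) (hθ : θ = (π.pos w).th)
    (hn : n = (π.pos w).node) (hst : ∃ l r, (π.pos w).st = GState.val l r)
    (h1 : 1 ≤ w) : GoodX π (w + 1) (ξ.updates (cUpd n zs θ w)) := by
  refine GoodX.mk _ _ (fun z n' θ' k hk => ?_) (fun z n' θ' k hk => ?_) <;>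
    rcases xi_look_updates_cases hk with h | h
  · obtain ⟨he1, he2, he3⟩ := cUpd_lookup_struct h
    simp only at he1 he2 he3
    subst he1; subst he2
    obtain ⟨d, hd⟩ := he3
    exact ⟨h1, by omega, hθ, ⟨d, by rw [hd, hn]⟩, hst⟩
  · obtain ⟨g1, g2, g3, g4, g5, g6⟩ := goodX_elim hX h.2
    exact ⟨g1, by omega, g3, g4, g5⟩
  · obtain ⟨he1, he2, he3⟩ := cUpd_lookup_struct h
    simp only at he1 he2 he3
    subst he1; subst he2
    exact hθ ▸ hT
  · exact (goodX_elim hX h.2).2.2.2.2.2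

/-- Provenance: the tables of every position of a play are `Good`. -/
theorem prov (π : Play T P) : ∀ w, 1 ≤ w → w ≤ π.len →
    GoodT π w (π.pos w).th ∧ GoodX π w (π.pos w).xi := by
  intro w
  induction w with
  | zero => omega
  | succ w ih =>
    intro _ hwlen
    by_cases hw1 : w = 0
    · subst hw1
      constructor
      · refine GoodT.mk _ _ (fun y l ξ₀ k hk => ?_) (fun y l ξ₀ k hk => ?_) <;>
        · rw [π.init_th] at hk; exact absurd hk (by rw [theta_look_empty]; simp)
      · refine GoodX.mk _ _ (fun z n' θ' k hk => ?_) (fun z n' θ' k hk => ?_) <;>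
        · rw [π.init_xi] at hk; exact absurd hk (by rw [xi_look_empty]; simp)
    · have h1w : 1 ≤ w := by omega
      have hwl : w < π.len := by omega
      obtain ⟨ihT, ihX⟩ := ih h1w (by omega)
      have hstep := π.steps w h1w hwl
      generalize hsrc : π.pos w = src at hstep
      generalize htgt : π.pos (w + 1) = tgt at hstep
      generalize hmv : π.mv (w + 1) = mk at hstep
      rw [hsrc] at ihT ihX
      cases hstep with
      | A1 n xs ls r θ ξ a ha hb hc =>
        have ihT' : GoodT π w θ := ihT
        have ihX' : GoodX π w ξ := ihX
        have hξ : ξ = (π.pos w).xi := by rw [hsrc]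
        have hlab : T.labelAt? ((π.pos w).node) = some (.lam xs) := by rw [hsrc]; exact ha
        exact ⟨goodT_updates_aUpd ihT' ihX' hξ hlab h1w, goodX_mono ihX' (by omega)⟩
      | A2 n xs ls r θ ξ f A ss ha hb hc hd he =>
        have ihT' : GoodT π w θ := ihT
        have ihX' : GoodX π w ξ := ihX
        have hξ : ξ = (π.pos w).xi := by rw [hsrc]
        have hlab : T.labelAt? ((π.pos w).node) = some (.lam xs) := by rw [hsrc]; exact ha
        exact ⟨goodT_updates_aUpd ihT' ihX' hξ hlab h1w, goodX_mono ihX' (by omega)⟩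
      | A2f n xs ls r θ ξ f A ha hb hc hd he =>
        have ihT' : GoodT π w θ := ihT
        have ihX' : GoodX π w ξ := ihX
        have hξ : ξ = (π.pos w).xi := by rw [hsrc]
        have hlab : T.labelAt? ((π.pos w).node) = some (.lam xs) := by rw [hsrc]; exact ha
        exact ⟨goodT_updates_aUpd ihT' ihX' hξ hlab h1w, goodX_mono ihX' (by omega)⟩
      | A3 n xs ls r θ ξ ξ₀ y B l i ha hb hc hd =>
        have ihT' : GoodT π w θ := ihT
        have ihX' : GoodX π w ξ := ihX
        have hξ : ξ = (π.pos w).xi := by rw [hsrc]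
        have hlab : T.labelAt? ((π.pos w).node) = some (.lam xs) := by rw [hsrc]; exact ha
        refine ⟨goodT_updates_aUpd ihT' ihX' hξ hlab h1w, ?_⟩
        rcases theta_look_updates_cases hd with h | h
        · obtain ⟨he1, he2, -⟩ := aUpd_lookup_struct h
          simp only at he1 he2
          subst he1
          exact goodX_mono ihX' (by omega)
        · obtain ⟨-, g2, -, -, g5⟩ := goodT_elim ihT' h.2
          exact goodX_mono g5 (by omega)
      | B1 n f A r ss θ ξ d sd ha hb hc =>
        have ihT' : GoodT π w θ := ihT
        have ihX' : GoodX π w ξ := ihX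
        exact ⟨goodT_mono ihT' (by omega), goodX_mono ihX' (by omega)⟩
      | C1 n y B l r θ ξ a ha hb =>
        have ihT' : GoodT π w θ := ihT
        have ihX' : GoodX π w ξ := ihX
        have hθ : θ = (π.pos w).th := by rw [hsrc]
        have hn : n = (π.pos w).node := by rw [hsrc]
        have hst : ∃ l' r', (π.pos w).st = GState.val l' r' := ⟨l, r, by rw [hsrc]⟩
        exact ⟨goodT_mono ihT' (by omega),
          goodX_updates_cUpd ihX' ihT' hθ hn hst h1w⟩
      | C2 n y B r θ ξ c A ss d sd ha hb hc hd =>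
        have ihT' : GoodT π w θ := ihT
        have ihX' : GoodX π w ξ := ihX
        exact ⟨goodT_mono ihT' (by omega), goodX_mono ihX' (by omega)⟩
      | C2f n y B r θ ξ c A ha hb hc =>
        have ihT' : GoodT π w θ := ihT
        have ihX' : GoodX π w ξ := ihX
        exact ⟨goodT_mono ihT' (by omega), goodX_mono ihX' (by omega)⟩
      | C3 n y B l r θ ξ f A ws ss d wd sd ha hb hc hd he hf =>
        have ihT' : GoodT π w θ := ihT
        have ihX' : GoodX π w ξ := ihX
        have hθ : θ = (π.pos w).th := by rw [hsrc]
        have hn : n = (π.pos w).node := by rw [hsrc]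
        have hst : ∃ l' r', (π.pos w).st = GState.val l' r' := ⟨l, r, by rw [hsrc]⟩
        exact ⟨goodT_mono ihT' (by omega),
          goodX_updates_cUpd ihX' ihT' hθ hn hst h1w⟩
      | C3f n y B l r θ ξ f A ws ha hb hc hd =>
        have ihT' : GoodT π w θ := ihT
        have ihX' : GoodX π w ξ := ihX
        have hθ : θ = (π.pos w).th := by rw [hsrc]
        have hn : n = (π.pos w).node := by rw [hsrc]
        have hst : ∃ l' r', (π.pos w).st = GState.val l' r' := ⟨l, r, by rw [hsrc]⟩
        exact ⟨goodT_mono ihT' (by omega),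
          goodX_updates_cUpd ihX' ihT' hθ hn hst h1w⟩
      | C4 n y B l r θ θ₀ ξ x C ws n' i ha hb hc =>
        have ihT' : GoodT π w θ := ihT
        have ihX' : GoodX π w ξ := ihX
        have hθ : θ = (π.pos w).th := by rw [hsrc]
        have hn : n = (π.pos w).node := by rw [hsrc]
        have hst : ∃ l' r', (π.pos w).st = GState.val l' r' := ⟨l, r, by rw [hsrc]⟩
        refine ⟨?_, goodX_updates_cUpd ihX' ihT' hθ hn hst h1w⟩
        rcases xi_look_updates_cases hc with h | h
        · obtain ⟨he1, -, -⟩ := cUpd_lookup_struct h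
          simp only at he1
          subst he1
          exact goodT_mono ihT' (by omega)
        · obtain ⟨-, g2, -, -, -, g6⟩ := goodX_elim ihX' h.2
          exact goodT_mono g6 (by omega)

end Prov


/-! #### Tree and tile lemmas -/

section Tiles

theorem labelAt_at {T : TTree} {ν : List ℕ} {lab : TLabel}
    (h : T.labelAt? ν = some lab) : ∃ t', T.at? ν = some t' ∧ t'.label = lab := by
  unfold TTree.labelAt? at h
  cases ha : T.at? ν with
  | none => rw [ha] at h; simp at h
  | some t' => rw [ha] at h; simp at h; exact ⟨t', rfl, h⟩

theorem bindersAlong_nil (t : TTree) : t.bindersAlong [] = [] := rfl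

theorem tileHead_simple {T : TTree} {ν : List ℕ} {k : ℕ} {q' : List ℕ}
    (h : TileHead T ν (.mk (List.replicate k none)) q') : q' = ν := by
  generalize hγ : Tile.mk (List.replicate k (none : Option Tile)) = γ at h
  cases h with
  | root => rfl
  | sub p subs i τ' q hsub hh =>
    exfalso
    injection hγ with h'
    rw [← h'] at hsub
    rw [List.getElem?_replicate] at hsub
    split at hsub
    · simp at hsub
    · simp at hsub

/-- If a node strictly below the end leaf `q` is labelled by a variable bound in
`τ`, the simple tile there is an immediate dependent, contradicting `EndAt`. -/
theorem endAt_no_var_below {T : TTree} {p q : List ℕ} {τ : Tile}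
    (hend : EndAt T p τ q) {ν : List ℕ} {y : ℕ} {B : Ty}
    (hpre : q <+: ν) (hne : q ≠ ν)
    (hlab : T.labelAt? ν = some (.var y B)) (hbind : TileBindsName T p τ y) :
    False := by
  obtain ⟨t', hat, hlabel⟩ := labelAt_at hlab
  have hvalid : TileValid T ν (Tile.mk (List.replicate t'.children.length none)) := by
    refine TileValid.mk ν _ t' hat ?_ (by simp) ?_
    · rw [hlabel]; trivial
    · intro i τ' hsub
      rw [List.getElem?_replicate] at hsub
      split at hsub
      · simp at hsub
      · simp at hsub
  have hfree : TileFreeVarAt T ν (Tile.mk (List.replicate t'.children.length none)) ν y := by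
    refine ⟨TileHead.root _ _, ⟨B, hlab⟩, ?_⟩
    intro t'' _
    rw [List.drop_length, bindersAlong_nil]
    simp
  have hbasic : BasicTile T ν (Tile.mk (List.replicate t'.children.length none)) := by
    refine ⟨hvalid, Or.inl ⟨⟨ν, ⟨y, hfree⟩, ?_⟩, ?_⟩⟩
    · intro q'' ⟨y'', hfree''⟩
      exact tileHead_simple hfree''.1
    · rintro ⟨q'', c, hhead, A, hclab⟩
      have hq : q'' = ν := tileHead_simple hhead
      subst hq
      rw [hlab] at hclab
      simp at hclab
  exact hend.2 ⟨ν, _, hbasic, ⟨hend.1, hpre, hne⟩, ν, y, hfree, hbind⟩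

/-- The route through a tile determined by the (relative) path of a leaf. -/
inductive RouteLeaf : Tile → List ℕ → Prop
  | leaf (subs : List (Option Tile)) (d : ℕ) :
      subs[d]? = some none → RouteLeaf (.mk subs) [d]
  | cons (subs : List (Option Tile)) (d : ℕ) (τ' : Tile) (rest : List ℕ) :
      subs[d]? = some (some τ') → RouteLeaf τ' rest →
      RouteLeaf (.mk subs) (d :: 0 :: rest)

end Tiles

/-! #### The table invariant carried along a play on a tile -/

section Walk

variable {T : TTree} {P : DIProblem}

/-- Every entry of `θ` is resolution-safe or keyed by a name bound in `τ`. -/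
def ThetaOk (i m : ℕ) (T' : TTree) (p : List ℕ) (τ : Tile) (θ : Theta) : Prop :=
  ∀ y l ξ₀ k, θ.look y = some (l, ξ₀, k) →
    benign i m l ξ₀ ∨ TileBindsName T' p τ y

theorem lookup_mem_nat {β : Type} {L : List (ℕ × β)} {a : ℕ} {b : β}
    (h : List.lookup a L = some b) : (a, b) ∈ L := by
  induction L with
  | nil => simp [List.lookup] at h
  | cons hd tl ih =>
    cases hd with
    | mk k v =>
      rw [List.lookup] at h
      by_cases hk : a == k
      · have : a = k := by simpa using hk
        subst this
        simp only [hk] at h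
        simp only [Option.some_inj] at h
        subst h
        exact List.mem_cons_self ..
      · simp only [Bool.of_not_eq_true hk] at h
        exact List.mem_cons_of_mem _ (ih h)

theorem aUpd_lookup_key {xs : List (ℕ × Ty)} {ls : List Tm} {ξ : Xi} {w : ℕ}
    {y : ℕ} {v : Tm × Xi × ℕ} (h : List.lookup y (aUpd xs ls ξ w) = some v) :
    y ∈ xs.map Prod.fst := by
  have hm := lookup_mem_nat h
  unfold aUpd at hm
  obtain ⟨pq, hpq, hpx⟩ := List.mem_map.mp hm
  have h1 : pq.1.1 = y := congrArg Prod.fst hpx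
  rw [← h1]
  exact List.mem_map.mpr ⟨pq.1, (List.of_mem_zip hpq).1, rfl⟩

theorem thetaOk_updates_aUpd {i m : ℕ} {T' : TTree} {p : List ℕ} {τ : Tile}
    {θ : Theta} {xs : List (ℕ × Ty)} {ls : List Tm} {ξ : Xi} {w : ℕ}
    (hok : ThetaOk i m T' p τ θ)
    (hkeys : ∀ y ∈ xs.map Prod.fst, TileBindsName T' p τ y) :
    ThetaOk i m T' p τ (θ.updates (aUpd xs ls ξ w)) := by
  intro y l ξ₀ k hk
  rcases theta_look_updates_cases hk with h | h
  · exact Or.inr (hkeys y (aUpd_lookup_key h))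
  · exact hok y l ξ₀ k h.2

/-- Analysis of a child move from a head node of a valid tile to one of its
λ-successors. -/
theorem cut_child_analysis {π : Play T P} {a b : ℕ} {P₁ : List ℕ} {d : ℕ}
    (hch : π.child b a) (hna : (π.pos a).node = P₁)
    (hnb : (π.pos b).node = P₁ ++ [d])
    {t₀ : TTree} (hat : T.at? P₁ = some t₀) (hhead : t₀.label.isHeadLabel) :
    1 ≤ a ∧ (π.pos b).th = (π.pos a).th ∧
    (∃ ls r, (π.pos b).st = GState.arg ls r) ∧
    (b = a + 1 ∨ π.mv b = .C4) := by
  obtain ⟨hab, hblen, hcase⟩ := hch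
  have hlabP₁ : T.labelAt? P₁ = some t₀.label := by
    unfold TTree.labelAt?
    rw [hat]
    rfl
  have hnotlam : ∀ xs, T.labelAt? P₁ = some (.lam xs) → False := by
    intro xs hxs
    rw [hlabP₁] at hxs
    have : t₀.label = TLabel.lam xs := by injection hxs
    rw [this] at hhead
    exact hhead
  rcases hcase with ⟨hmv4, hba⟩ | ⟨hmv, y, B, l, ξ', hvb, hlk⟩ | ⟨hmv, l, r, x, C, hst1, hhd, hlk⟩
  · -- case 1 : b = a + 1 via A2/B1/C2/C3
    have hb1 : b = a + 1 := by omega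
    have h1a : 1 ≤ a := by
      by_contra h0
      have ha0 : a = 0 := by omega
      have : (π.pos 1).node = P₁ ++ [d] := by rw [← hnb, hb1, ha0]
      rw [π.init_node] at this
      exact absurd this.symm (by simp)
    have hstep := π.steps a h1a (by omega)
    rw [← hb1] at hstep
    generalize hsrc : π.pos a = src at hstep
    generalize htgt : π.pos b = tgt at hstep
    generalize hmvv : π.mv b = mk₀ at hstep
    rw [hmvv] at hmv4
    rw [hsrc] at hna
    rw [htgt] at hnb
    cases hstep with
    | A1 n xs ls r θ ξ a' ha' hb' hc' => simp at hmv4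
    | A2 n xs ls r θ ξ f A ss ha' hb' hc' hd' he' =>
      exact absurd (hna ▸ ha') (fun hh => hnotlam xs hh)
    | A2f n xs ls r θ ξ f A ha' hb' hc' hd' he' =>
      exact absurd (hna ▸ ha') (fun hh => hnotlam xs hh)
    | A3 n xs ls r θ ξ ξ₀ y B l i ha' hb' hc' hd' => simp at hmv4
    | B1 n f A r ss θ ξ d' sd ha' hb' hc' =>
      exact ⟨h1a, rfl, ⟨_, _, rfl⟩, Or.inl hb1⟩
    | C1 n y B l r θ ξ a' ha' hb' => simp at hmv4
    | C2 n y B r θ ξ c A ss d' sd ha' hb' hc' hd' =>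
      exact ⟨h1a, rfl, ⟨_, _, rfl⟩, Or.inl hb1⟩
    | C2f n y B r θ ξ c A ha' hb' hc' =>
      exfalso
      have : P₁ ++ [d] = n := by rw [← hnb]
      have hn : n = P₁ := by rw [← hna]
      rw [hn] at this
      simpa using congrArg List.length this
    | C3 n y B l r θ ξ f A ws ss d' wd sd ha' hb' hc' hd' he' hf' =>
      exfalso
      have : P₁ ++ [d] = n := by rw [← hnb]
      have hn : n = P₁ := by rw [← hna]
      rw [hn] at this
      simpa using congrArg List.length this
    | C3f n y B l r θ ξ f A ws ha' hb' hc' hd' =>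
      exfalso
      have : P₁ ++ [d] = n := by rw [← hnb]
      have hn : n = P₁ := by rw [← hna]
      rw [hn] at this
      simpa using congrArg List.length this
    | C4 n y B l r θ θ₀ ξ x C ws n' i ha' hb' hc' => simp at hmv4
  · -- case 2 : A3 child, impossible at a head node
    exfalso
    have hprov := (prov π b (by omega) (by omega)).1
    obtain ⟨-, -, ⟨xs, hxs⟩, -, -⟩ := goodT_elim hprov hlk
    rw [hna] at hxs
    exact hnotlam xs hxs
  · -- case 3 : C4 child
    have hprov := (prov π b (by omega) (by omega)).2
    obtain ⟨h1a, -, hθeq, -, -, -⟩ := goodX_elim hprov hlk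
    have hb2 : 2 ≤ b := by omega
    have hstep := π.steps (b - 1) (by omega) (by omega)
    have hb1 : b - 1 + 1 = b := by omega
    rw [hb1] at hstep
    generalize hsrc : π.pos (b - 1) = src at hstep
    generalize htgt : π.pos b = tgt at hstep
    generalize hmvv : π.mv b = mk₀ at hstep
    rw [hmvv] at hmv
    subst hmv
    cases hstep with
    | C4 n y B l r θ θ₀ ξ x' C' ws n' i ha' hb' hc' =>
      refine ⟨h1a, ?_, ⟨_, _, rfl⟩, Or.inr rfl⟩
      rw [← htgt]
      exact hθeq


theorem cuts_child {T : TTree} {P : DIProblem} {π : Play T P} {P₁ : List ℕ}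
    {τ₁ : Tile} {cuts : List (ℕ × ℕ)} {q : List ℕ}
    (h : π.TilePlayCuts P₁ τ₁ cuts q) :
    ∃ a b rest, cuts = (a, b) :: rest ∧ π.child b a := by
  cases h with
  | simple p₂ subs d a b hsub hna hnb hch => exact ⟨a, b, [], rfl, hch⟩
  | step p₂ subs d a b j₂ cuts' q₀ τ' hsub hna hnb hch hinner =>
    exact ⟨a, b, _, rfl, hch⟩

/-- Walk along the cut decomposition of the play `π(i,m)` on `(p, τ)`:
the `ThetaOk` invariant is carried to the final position, which sits at the
leaf `q` in an argument state. -/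
theorem walk1 {T : TTree} {P : DIProblem} {π : Play T P} {p : List ℕ} {τ : Tile}
    {i m : ℕ} {P₁ : List ℕ} {τ₁ : Tile} {cuts : List (ℕ × ℕ)} {q : List ℕ}
    (h : π.TilePlayCuts P₁ τ₁ cuts q) :
    TileValid T P₁ τ₁ →
    (∀ q', TileLam T P₁ τ₁ q' → TileLam T p τ q') →
    ∀ a b rest, cuts = (a, b) :: rest →
    ThetaOk i m T p τ ((π.pos a).th) →
    ∀ y, cuts.getLast? = some y →
    ThetaOk i m T p τ ((π.pos y.2).th) ∧ (π.pos y.2).node = q ∧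
    (∃ ls r, (π.pos y.2).st = GState.arg ls r) ∧ y.2 < π.len ∧ a < y.2 ∧
    (∃ suf, q = P₁ ++ suf ∧ RouteLeaf τ₁ suf ∧ suf.length % 2 = 1) ∧
    TileLam T p τ q := by
  induction h with
  | simple p₂ subs d a b hsub hna hnb hch =>
    intro hvalid htrans aa bb rest hcuts hok y hy
    injection hcuts with h1 h2
    injection h1 with ha hb
    subst ha; subst hb
    have hyy : y = (a, b) := by
      rw [List.getLast?] at hy
      simpa using hy.symm
    subst hyy
    obtain ⟨hlt, -⟩ := List.getElem?_eq_some_iff.mp hsub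
    obtain ⟨t₀, hat, hhead⟩ : ∃ t₀, T.at? p₂ = some t₀ ∧ t₀.label.isHeadLabel := by
      cases hvalid with
      | mk _ _ t₀ hat hhead hlen hsubs => exact ⟨t₀, hat, hhead⟩
    obtain ⟨h1a, hth, hstarg, -⟩ := cut_child_analysis hch hna hnb hat hhead
    have hlam : TileLam T p τ (p₂ ++ [d]) :=
      htrans _ (TileLam.lam p₂ subs d hlt)
    exact ⟨by rw [hth]; exact hok, hnb, hstarg, hch.2.1, hch.1,
      ⟨[d], rfl, RouteLeaf.leaf subs d hsub, by simp⟩, hlam⟩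
  | step p₂ subs d a b j₂ cuts' q₀ τ' hsub hna hnb hch hinner IH =>
    intro hvalid htrans aa bb rest hcuts hok y hy
    injection hcuts with h1 h2
    injection h1 with ha hb
    subst ha; subst hb
    obtain ⟨hlt, -⟩ := List.getElem?_eq_some_iff.mp hsub
    obtain ⟨t₀, hat, hhead, hsubvalid⟩ :
        ∃ t₀, T.at? p₂ = some t₀ ∧ t₀.label.isHeadLabel ∧
          (∀ i' τ'', subs[i']? = some (some τ'') → TileValid T (p₂ ++ [i', 0]) τ'') := by
      cases hvalid with
      | mk _ _ t₀ hat hhead hlen hsubs => exact ⟨t₀, hat, hhead, hsubs⟩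
    obtain ⟨h1a, hth, hstarg, -⟩ := cut_child_analysis hch hna hnb hat hhead
    -- bounds from the first inner child
    obtain ⟨a₂, b₂, rest₂, hc₂, hch₂⟩ := cuts_child hinner
    have ha₂ : a₂ = b + 1 := by
      have h1 := (List.cons.inj hc₂).1
      injection h1 with h1a h1b
      exact h1a.symm
    subst ha₂
    have hblen : b + 1 < π.len := by
      have := hch₂.1
      have := hch₂.2.1
      omega
    -- the A-move from the λ-node position b
    have h1b : 1 ≤ b := by have := hch.1; omega
    have hstep := π.steps b h1b (by omega)
    generalize hsrc : π.pos b = src at hstep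
    generalize htgt : π.pos (b + 1) = tgt at hstep
    generalize hmvk : π.mv (b + 1) = mk₀ at hstep
    rw [hsrc] at hstarg hth hnb
    have hokb : ThetaOk i m T p τ src.th := by rw [hth]; exact hok
    have hok' : ThetaOk i m T p τ ((π.pos (b + 1)).th) := by
      rw [htgt]
      cases hstep with
      | A1 n xs ls r θ ξ a₀ ha' hb' hc' =>
        -- final target, impossible since the play continues
        exfalso
        have hfin : (π.pos (b + 1)).st.IsFinal := by
          rw [htgt]
          dsimp only
          split <;> trivial
        have := (π.final_iff (b + 1) (by omega) (by omega)).mp hfin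
        omega
      | A2 n xs ls r θ ξ f A ss ha' hb' hc' hd' he' =>
        refine thetaOk_updates_aUpd hokb ?_
        intro y' hy'
        have hn : n = p₂ ++ [d] := hnb
        exact ⟨p₂ ++ [d], xs, htrans _ (TileLam.lam p₂ subs d hlt), hn ▸ ha', hy'⟩
      | A2f n xs ls r θ ξ f A ha' hb' hc' hd' he' =>
        exfalso
        have hfin : (π.pos (b + 1)).st.IsFinal := by
          rw [htgt]; trivial
        have := (π.final_iff (b + 1) (by omega) (by omega)).mp hfin
        omega
      | A3 n xs ls r θ ξ ξ₀ y₀ B l i₀ ha' hb' hc' hd' =>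
        refine thetaOk_updates_aUpd hokb ?_
        intro y' hy'
        have hn : n = p₂ ++ [d] := hnb
        exact ⟨p₂ ++ [d], xs, htrans _ (TileLam.lam p₂ subs d hlt), hn ▸ ha', hy'⟩
      | B1 n f A r ss θ ξ d' sd ha' hb' hc' =>
        exfalso
        obtain ⟨ls, r', hh⟩ := hstarg
        simp at hh
      | C1 n y₀ B l r θ ξ a₀ ha' hb' =>
        exfalso
        obtain ⟨ls, r', hh⟩ := hstarg
        simp at hh
      | C2 n y₀ B r θ ξ c A ss d' sd ha' hb' hc' hd' =>
        exfalso
        obtain ⟨ls, r', hh⟩ := hstarg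
        simp at hh
      | C2f n y₀ B r θ ξ c A ha' hb' hc' =>
        exfalso
        obtain ⟨ls, r', hh⟩ := hstarg
        simp at hh
      | C3 n y₀ B l r θ ξ f A ws ss d' wd sd ha' hb' hc' hd' he' hf' =>
        exfalso
        obtain ⟨ls, r', hh⟩ := hstarg
        simp at hh
      | C3f n y₀ B l r θ ξ f A ws ha' hb' hc' hd' =>
        exfalso
        obtain ⟨ls, r', hh⟩ := hstarg
        simp at hh
      | C4 n y₀ B l r θ θ₀ ξ x C ws n' i₀ ha' hb' hc' =>
        exfalso
        obtain ⟨ls, r', hh⟩ := hstarg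
        simp at hh
    have hy' : ((b + 1, j₂) :: cuts').getLast? = some y := by
      rwa [List.getLast?_cons_cons] at hy
    obtain ⟨c1, c2, c3, c4, c5, ⟨suf, hsuf, hroute, hpar⟩, c7⟩ :=
      IH (hsubvalid d τ' hsub)
        (fun q' hl => htrans _ (TileLam.sub p₂ subs d τ' q' hsub hl))
        (b + 1) j₂ cuts' rfl hok' y hy'
    have h5 : a < y.2 := by
      have := hch.1
      omega
    have hp : (d :: 0 :: suf).length % 2 = 1 := by
      simp only [List.length_cons]
      omega
    refine ⟨c1, c2, c3, c4, h5, ⟨d :: 0 :: suf, ?_, ?_, hp⟩, c7⟩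
    · rw [hsuf, List.append_assoc]; rfl
    · exact RouteLeaf.cons subs d τ' suf hsub hroute


/-! #### Small list lemmas -/

theorem mem_of_getElem?' {α : Type} {l : List α} {n : ℕ} {a : α}
    (h : l[n]? = some a) : a ∈ l := by
  obtain ⟨hlt, he⟩ := List.getElem?_eq_some_iff.mp h
  exact he ▸ List.getElem_mem hlt

/-! #### The main invariant for positions after `m` -/

section Inv

variable {T : TTree} {P : DIProblem} {π : Play T P}

/-- All entries of `θ` are resolution-safe. -/
def ThNoBad (i m : ℕ) (θ : Theta) : Prop :=
  ∀ y l ξ₀ k, θ.look y = some (l, ξ₀, k) → benign i m l ξ₀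

theorem goodT_thNoBad {i m w : ℕ} {θ : Theta} (h : GoodT π w θ) (hw : w ≤ i) :
    ThNoBad i m θ := by
  intro y l ξ₀ k hk
  obtain ⟨-, hkw, -, -, hgx⟩ := goodT_elim h hk
  intro x hx n' θ' k' hk'
  obtain ⟨-, hk'2, -⟩ := goodX_elim hgx hk'
  exact Or.inl (by omega)

theorem thNoBad_thetaOk {i m : ℕ} {T' : TTree} {p : List ℕ} {τ : Tile} {θ : Theta}
    (h : ThNoBad i m θ) : ThetaOk i m T' p τ θ :=
  fun y l ξ₀ k hk => Or.inl (h y l ξ₀ k hk)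

/-- The invariant satisfied by every position `w` with `m ≤ w ≤ |π|`. -/
theorem inv_all {p q : List ℕ} {τ : Tile} {i m : ℕ}
    (hend : EndAt T p τ q)
    (hqlam : TileLam T p τ q)
    (hnodem : (π.pos m).node = q)
    (hstm : ∃ ls r, (π.pos m).st = GState.arg ls r)
    (hokm : ThetaOk i m T p τ ((π.pos m).th))
    (h1m : 1 ≤ m) :
    ∀ w, m ≤ w → w ≤ π.len →
      (∀ l r, (π.pos w).st = GState.val l r → benign i m l ((π.pos w).xi)) ∧
      (∀ ls r, (π.pos w).st = GState.arg ls r → w ≠ m →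
        ∀ l ∈ ls, benign i m l ((π.pos w).xi)) ∧
      ThetaOk i m T p τ ((π.pos w).th) ∧
      (q <+: (π.pos w).node ∨ ThNoBad i m ((π.pos w).th)) := by
  intro w
  induction w using Nat.strong_induction_on with
  | _ w IH =>
    intro hmw hwlen
    rcases Nat.eq_or_lt_of_le hmw with he | hlt
    · -- base : w = m
      subst he
      obtain ⟨ls₀, r₀, hargm⟩ := hstm
      refine ⟨?_, ?_, hokm, Or.inl (by rw [hnodem])⟩
      · intro l r h
        rw [hargm] at h
        simp at h
      · intro ls r h hne
        exact absurd rfl hne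
    · -- step : w = v + 1 with m ≤ v < w
      obtain ⟨v, rfl⟩ : ∃ v, w = v + 1 := ⟨w - 1, by omega⟩
      have hmv : m ≤ v := by omega
      have hvlen : v < π.len := by omega
      have h1v : 1 ≤ v := by omega
      obtain ⟨IA, IB, IC, ID⟩ := IH v (by omega) hmv (by omega)
      have hstep := π.steps v h1v hvlen
      generalize hsrc : π.pos v = src at hstep
      generalize htgt : π.pos (v + 1) = tgt at hstep
      generalize hmvk : π.mv (v + 1) = mk₀ at hstep
      rw [hsrc] at IA IB IC ID
      -- a helper fact : if the state at v is a value state then v ≠ m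
      have hvm_of_val : ∀ l r, src.st = GState.val l r → m < v := by
        intro l r hv
        rcases Nat.eq_or_lt_of_le hmv with he' | h'
        · exfalso
          obtain ⟨ls₀, r₀, hargm⟩ := hstm
          rw [he', hsrc] at hargm
          rw [hargm] at hv
          simp at hv
        · exact h'
      cases hstep with
      | A1 n xs ls r θ ξ a ha' hb' hc' =>
        refine ⟨?_, ?_, ?_, ?_⟩
        · intro l' r' h
          dsimp only at h
          split at h <;> simp at h
        · intro ls' r' h hne
          dsimp only at h
          split at h <;> simp at h
        · -- ThetaOk of the updated table
          intro y' l' ξ' k' hk'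
          rcases theta_look_updates_cases hk' with hnew | hold
          · rcases Nat.eq_or_lt_of_le hmv with hem | hgt
            · refine Or.inr ⟨q, xs, hqlam, ?_, aUpd_lookup_key hnew⟩
              have hn : n = q := by
                rw [← hnodem, hem, hsrc]
              rw [← hn]
              exact ha'
            · obtain ⟨he1, -, he3⟩ := aUpd_lookup_struct hnew
              simp only at he1 he3
              subst he1
              exact Or.inl (IB ls r rfl (by omega) l' he3)
          · exact IC y' l' ξ' k' hold.2
        · rcases Nat.eq_or_lt_of_le hmv with hem | hgt
          · refine Or.inl ?_
            have hn : n = q := by rw [← hnodem, hem, hsrc]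
            rw [hn]
            exact (List.prefix_append q [0])
          · rcases ID with hL | hR
            · exact Or.inl (hL.trans (List.prefix_append n [0]))
            · refine Or.inr ?_
              intro y' l' ξ' k' hk'
              rcases theta_look_updates_cases hk' with hnew | hold
              · obtain ⟨he1, -, he3⟩ := aUpd_lookup_struct hnew
                simp only at he1 he3
                subst he1
                exact IB ls r rfl (by omega) l' he3
              · exact hR y' l' ξ' k' hold.2
      | A2 n xs ls r θ ξ f A ss ha' hb' hc' hd' he' =>
        refine ⟨?_, ?_, ?_, ?_⟩
        · intro l' r' h
          simp at h
        · intro ls' r' h hne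
          simp at h
        · intro y' l' ξ' k' hk'
          rcases theta_look_updates_cases hk' with hnew | hold
          · rcases Nat.eq_or_lt_of_le hmv with hem | hgt
            · refine Or.inr ⟨q, xs, hqlam, ?_, aUpd_lookup_key hnew⟩
              have hn : n = q := by rw [← hnodem, hem, hsrc]
              rw [← hn]
              exact ha'
            · obtain ⟨he1, -, he3⟩ := aUpd_lookup_struct hnew
              simp only at he1 he3
              subst he1
              exact Or.inl (IB ls r rfl (by omega) l' he3)
          · exact IC y' l' ξ' k' hold.2
        · rcases Nat.eq_or_lt_of_le hmv with hem | hgt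
          · refine Or.inl ?_
            have hn : n = q := by rw [← hnodem, hem, hsrc]
            rw [hn]
            exact (List.prefix_append q [0])
          · rcases ID with hL | hR
            · exact Or.inl (hL.trans (List.prefix_append n [0]))
            · refine Or.inr ?_
              intro y' l' ξ' k' hk'
              rcases theta_look_updates_cases hk' with hnew | hold
              · obtain ⟨he1, -, he3⟩ := aUpd_lookup_struct hnew
                simp only at he1 he3
                subst he1
                exact IB ls r rfl (by omega) l' he3
              · exact hR y' l' ξ' k' hold.2
      | A2f n xs ls r θ ξ f A ha' hb' hc' hd' he' =>
        refine ⟨?_, ?_, ?_, ?_⟩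
        · intro l' r' h
          simp at h
        · intro ls' r' h hne
          simp at h
        · intro y' l' ξ' k' hk'
          rcases theta_look_updates_cases hk' with hnew | hold
          · rcases Nat.eq_or_lt_of_le hmv with hem | hgt
            · refine Or.inr ⟨q, xs, hqlam, ?_, aUpd_lookup_key hnew⟩
              have hn : n = q := by rw [← hnodem, hem, hsrc]
              rw [← hn]
              exact ha'
            · obtain ⟨he1, -, he3⟩ := aUpd_lookup_struct hnew
              simp only at he1 he3
              subst he1
              exact Or.inl (IB ls r rfl (by omega) l' he3)
          · exact IC y' l' ξ' k' hold.2
        · rcases Nat.eq_or_lt_of_le hmv with hem | hgt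
          · refine Or.inl ?_
            have hn : n = q := by rw [← hnodem, hem, hsrc]
            rw [hn]
            exact (List.prefix_append q [0])
          · rcases ID with hL | hR
            · exact Or.inl (hL.trans (List.prefix_append n [0]))
            · refine Or.inr ?_
              intro y' l' ξ' k' hk'
              rcases theta_look_updates_cases hk' with hnew | hold
              · obtain ⟨he1, -, he3⟩ := aUpd_lookup_struct hnew
                simp only at he1 he3
                subst he1
                exact IB ls r rfl (by omega) l' he3
              · exact hR y' l' ξ' k' hold.2
      | A3 n xs ls r θ ξ ξ₀ y₀ B l k₀ ha' hb' hc' hd' =>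
        have hqne : ∀ nn : List ℕ, q <+: nn → q ≠ nn ++ [0] := by
          intro nn hpre heq
          have h1 := hpre.length_le
          have h2 := congrArg List.length heq
          simp at h2
          omega
        refine ⟨?_, ?_, ?_, ?_⟩
        · -- the new value state : benign
          intro l' r' h
          dsimp only at h
          have hll : l = l' := by injection h
          subst hll
          rcases theta_look_updates_cases hd' with hnew | hold
          · -- freshly bound : key of the aUpd
            rcases Nat.eq_or_lt_of_le hmv with hem | hgt
            · exfalso
              have hn : n = q := by rw [← hnodem, hem, hsrc]
              refine endAt_no_var_below hend (ν := n ++ [0]) ?_ ?_ hc'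
                ⟨q, xs, hqlam, by rw [← hn]; exact ha', aUpd_lookup_key hnew⟩
              · rw [hn]; exact List.prefix_append q [0]
              · rw [hn]
                exact hqne q (List.prefix_rfl)
            · obtain ⟨he1, -, he3⟩ := aUpd_lookup_struct hnew
              simp only at he1 he3
              subst he1
              exact IB ls r rfl (by omega) l he3
          · rcases IC y₀ l ξ₀ k₀ hold.2 with hben | hbind
            · exact hben
            · rcases ID with hL | hR
              · exact absurd (endAt_no_var_below hend
                  (ν := n ++ [0]) (hL.trans (List.prefix_append n [0]))
                  (hqne n hL) hc' hbind) (fun hf => hf)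
              · exact hR y₀ l ξ₀ k₀ hold.2
        · intro ls' r' h hne
          simp at h
        · intro y' l' ξ' k' hk'
          rcases theta_look_updates_cases hk' with hnew | hold
          · rcases Nat.eq_or_lt_of_le hmv with hem | hgt
            · refine Or.inr ⟨q, xs, hqlam, ?_, aUpd_lookup_key hnew⟩
              have hn : n = q := by rw [← hnodem, hem, hsrc]
              rw [← hn]
              exact ha'
            · obtain ⟨he1, -, he3⟩ := aUpd_lookup_struct hnew
              simp only at he1 he3
              subst he1
              exact Or.inl (IB ls r rfl (by omega) l' he3)
          · exact IC y' l' ξ' k' hold.2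
        · rcases Nat.eq_or_lt_of_le hmv with hem | hgt
          · refine Or.inl ?_
            have hn : n = q := by rw [← hnodem, hem, hsrc]
            rw [hn]
            exact (List.prefix_append q [0])
          · rcases ID with hL | hR
            · exact Or.inl (hL.trans (List.prefix_append n [0]))
            · refine Or.inr ?_
              intro y' l' ξ' k' hk'
              rcases theta_look_updates_cases hk' with hnew | hold
              · obtain ⟨he1, -, he3⟩ := aUpd_lookup_struct hnew
                simp only at he1 he3
                subst he1
                exact IB ls r rfl (by omega) l' he3
              · exact hR y' l' ξ' k' hold.2
      | B1 n f A r ss θ ξ d' sd ha' hb' hc' =>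
        refine ⟨?_, ?_, IC, ?_⟩
        · intro l' r' h
          simp [argStateOf] at h
        · intro ls' r' h hne
          dsimp only [argStateOf] at h
          have hls : ((sd.stripLams.1).map fun pr => Tm.const (P.fc pr.1) pr.2) = ls' := by
            injection h
          intro l' hl'
          rw [← hls] at hl'
          obtain ⟨pr, -, hpr⟩ := List.mem_map.mp hl'
          rw [← hpr]
          exact benign_const
        · rcases ID with hL | hR
          · exact Or.inl (hL.trans (List.prefix_append n [d']))
          · exact Or.inr hR
      | C1 n y₀ B l r θ ξ a ha' hb' =>
        refine ⟨?_, ?_, IC, ?_⟩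
        · intro l' r' h
          dsimp only at h
          split at h <;> simp at h
        · intro ls' r' h hne
          dsimp only at h
          split at h <;> simp at h
        · rcases ID with hL | hR
          · exact Or.inl hL
          · exact Or.inr hR
      | C2 n y₀ B r θ ξ c A ss d' sd ha' hb' hc' hd' =>
        refine ⟨?_, ?_, IC, ?_⟩
        · intro l' r' h
          simp [argStateOf] at h
        · intro ls' r' h hne
          dsimp only [argStateOf] at h
          have hls : ((sd.stripLams.1).map fun pr => Tm.const (P.fc pr.1) pr.2) = ls' := by
            injection h
          intro l' hl'
          rw [← hls] at hl'
          obtain ⟨pr, -, hpr⟩ := List.mem_map.mp hl'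
          rw [← hpr]
          exact benign_const
        · rcases ID with hL | hR
          · exact Or.inl (hL.trans (List.prefix_append n [d']))
          · exact Or.inr hR
      | C2f n y₀ B r θ ξ c A ha' hb' hc' =>
        refine ⟨?_, ?_, IC, ?_⟩
        · intro l' r' h
          simp at h
        · intro ls' r' h hne
          simp at h
        · rcases ID with hL | hR
          · exact Or.inl hL
          · exact Or.inr hR
      | C3 n y₀ B l r θ ξ f A ws ss d' wd sd ha' hb' hc' hd' he' hf' =>
        have hgtm : m < v := hvm_of_val l r rfl
        refine ⟨?_, ?_, IC, ?_⟩
        · intro l' r' h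
          dsimp only [valStateOf] at h
          have hll : Tm.fsubstPaired P.fc wd.stripLams.1 sd.stripLams.1 wd.stripLams.2 = l' := by
            injection h
          rw [← hll]
          have hben : benign i m l ξ := IA l r rfl
          have hocc : ∀ x, occursName (Tm.fsubstPaired P.fc wd.stripLams.1 sd.stripLams.1
              wd.stripLams.2) x → occursName l x := by
            intro x hx
            have h1 := occurs_stripLams (occurs_fsubstPaired hx)
            have hwdmem : wd ∈ ws := mem_of_getElem?' he'
            have hws : (l.stripLams.2).headArgs.2 = ws := by rw [hb']
            rw [← hws] at hwdmem
            exact occurs_stripLams (occurs_headArgs_arg hwdmem h1)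
          exact benign_updates_cUpd hgtm (benign_of_occurs_subset hocc hben)
        · intro ls' r' h hne
          simp [valStateOf] at h
        · rcases ID with hL | hR
          · exact Or.inl hL
          · exact Or.inr hR
      | C3f n y₀ B l r θ ξ f A ws ha' hb' hc' hd' =>
        refine ⟨?_, ?_, IC, ?_⟩
        · intro l' r' h
          simp at h
        · intro ls' r' h hne
          simp at h
        · rcases ID with hL | hR
          · exact Or.inl hL
          · exact Or.inr hR
      | C4 n y₀ B l r θ θ₀ ξ x C ws n' k₀ ha' hb' hc' =>
        have hgtm : m < v := hvm_of_val l r rfl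
        have hocc_x : occursName l x :=
          occurs_stripLams (occurs_headArgs_head (by rw [hb']))
        have hCD : ThetaOk i m T p τ θ₀ ∧ (q <+: n' ∨ ThNoBad i m θ₀) := by
          rcases xi_look_updates_cases hc' with hnew | hold
          · obtain ⟨he1, -, he3⟩ := cUpd_lookup_struct hnew
            simp only at he1 he3
            subst he1
            obtain ⟨d₀, hd₀⟩ := he3
            refine ⟨IC, ?_⟩
            rcases ID with hL | hR
            · exact Or.inl (by rw [hd₀]; exact hL.trans (List.prefix_append n [d₀]))
            · exact Or.inr hR
          · have hben : benign i m l ξ := IA l r rfl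
            have hrange := hben x hocc_x n' θ₀ k₀ hold.2
            have hprovX : GoodX π v ξ := by
              have := (prov π v h1v (by omega)).2
              rwa [hsrc] at this
            obtain ⟨-, hk₀v, hθ₀, ⟨d₀, hd₀⟩, -, hGT⟩ := goodX_elim hprovX hold.2
            rcases hrange with hlt' | hgt'
            · -- the entry predates i : the stored table is hereditarily benign
              have hnb : ThNoBad i m θ₀ := goodT_thNoBad hGT (by omega)
              exact ⟨thNoBad_thetaOk hnb, Or.inr hnb⟩
            · -- the entry was written after m : use the invariant at k₀
              obtain ⟨-, -, KC, KD⟩ := IH k₀ (by omega) (by omega) (by omega)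
              refine ⟨by rw [hθ₀]; exact KC, ?_⟩
              rcases KD with hL | hR
              · exact Or.inl (by rw [hd₀]; exact hL.trans (List.prefix_append _ [d₀]))
              · exact Or.inr (by rw [hθ₀]; exact hR)
        refine ⟨?_, ?_, hCD.1, hCD.2⟩
        · intro l' r' h
          simp at h
        · intro ls' r' h hne
          have hws : ws = ls' := by injection h
          intro l' hl'
          rw [← hws] at hl'
          have hben : benign i m l ξ := IA l r rfl
          have hocc : ∀ x', occursName l' x' → occursName l x' := by
            intro x' hx'
            have hws2 : (l.stripLams.2).headArgs.2 = ws := by rw [hb']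
            rw [← hws2] at hl'
            exact occurs_stripLams (occurs_headArgs_arg hl' hx')
          exact benign_updates_cUpd hgtm (benign_of_occurs_subset hocc hben)

end Inv

end Walk


/-! #### No cut of a play on `τ` from `i` can straddle `m` -/

section Straddle

variable {T : TTree} {P : DIProblem} {π : Play T P}

theorem straddle {p q : List ℕ} {τ : Tile} {i m : ℕ}
    (hnodem : (π.pos m).node = q)
    (hstm : ∃ ls r, (π.pos m).st = GState.arg ls r)
    (hinv : ∀ w, m ≤ w → w ≤ π.len →
      (∀ l r, (π.pos w).st = GState.val l r → benign i m l ((π.pos w).xi)) ∧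
      (∀ ls r, (π.pos w).st = GState.arg ls r → w ≠ m →
        ∀ l ∈ ls, benign i m l ((π.pos w).xi)) ∧
      ThetaOk i m T p τ ((π.pos w).th) ∧
      (q <+: (π.pos w).node ∨ ThNoBad i m ((π.pos w).th)))
    (hqodd : (q.length - p.length) % 2 = 1 ∧ p.length < q.length)
    {P₂ : List ℕ} {a b : ℕ} (hch : π.child b a) (hna : (π.pos a).node = P₂)
    {d : ℕ} (hnb : (π.pos b).node = P₂ ++ [d])
    {t₀ : TTree} (hat : T.at? P₂ = some t₀) (hhead : t₀.label.isHeadLabel)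
    (hpar : p.length ≤ P₂.length ∧ (P₂.length - p.length) % 2 = 0)
    (hia : i ≤ a) (ham : a ≤ m) : b ≤ m := by
  by_contra hbm
  push_neg at hbm
  obtain ⟨hab, hblen, hcase⟩ := hch
  have hlabP₂ : T.labelAt? P₂ = some t₀.label := by
    unfold TTree.labelAt?
    rw [hat]
    rfl
  have hnotlam : ∀ xs, T.labelAt? P₂ = some (.lam xs) → False := by
    intro xs hxs
    rw [hlabP₂] at hxs
    have : t₀.label = TLabel.lam xs := by injection hxs
    rw [this] at hhead
    exact hhead
  rcases hcase with ⟨hmv4, hba⟩ | ⟨hmv, y, B, l, ξ', hvb, hlk⟩ | ⟨hmv, l, r, x, C, hst1, hhd, hlk⟩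
  · -- case 1 : b = a + 1, so a = m and the head node P₂ equals the leaf q
    have hb1 : b = a + 1 := by omega
    have ham' : a = m := by omega
    have hP₂q : P₂ = q := by rw [← hna, ham', hnodem]
    have h1 := congrArg List.length hP₂q
    omega
  · -- case 2 : an A3 child of a head-labelled position is impossible
    have hprov := (prov π b (by omega) (by omega)).1
    obtain ⟨-, -, ⟨xs, hxs⟩, -, -⟩ := goodT_elim hprov hlk
    rw [hna] at hxs
    exact hnotlam xs hxs
  · -- case 3 : a C4 child using an entry with index in [i, m]
    have hb1m : m ≤ b - 1 := by omega
    rcases Nat.eq_or_lt_of_le hb1m with heq | hgt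
    · -- b - 1 = m : but the position m is an argument position
      obtain ⟨ls₀, r₀, hargm⟩ := hstm
      rw [heq] at hargm
      rw [hargm] at hst1
      simp at hst1
    · -- b - 1 > m : the value state at b - 1 is benign
      obtain ⟨IA, -, -, -⟩ := hinv (b - 1) (by omega) (by omega)
      have hben : benign i m l ((π.pos (b - 1)).xi) := IA l r hst1
      have hocc_x : occursName l x :=
        occurs_stripLams (occurs_headArgs_head (by rw [hhd]))
      -- relate the ξ-table at b to the one at b - 1 via the C4 move
      have h1b1 : 1 ≤ b - 1 := by omega
      have hstep := π.steps (b - 1) h1b1 (by omega)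
      have hb1 : b - 1 + 1 = b := by omega
      rw [hb1] at hstep
      generalize hsrc : π.pos (b - 1) = src at hstep
      generalize htgt : π.pos b = tgt at hstep
      generalize hmvv : π.mv b = mk₀ at hstep
      rw [hmvv] at hmv
      subst hmv
      rw [hsrc] at hst1 hben
      cases hstep with
      | C4 n y₀ B₀ l₂ r₂ θ θ₀ ξ x₂ C₂ ws n' k₀ ha' hb' hc' =>
        have hll : l₂ = l := by
          have : GState.val l₂ r₂ = GState.val l r := hst1
          injection this
        subst hll
        have hxi : (π.pos b).xi = ξ.updates (cUpd n l₂.stripLams.1 θ (b - 1)) := by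
          rw [htgt]
        rw [hxi] at hlk
        rcases xi_look_updates_cases hlk with hnew | hold
        · obtain ⟨-, he2, -⟩ := cUpd_lookup_struct hnew
          simp only at he2
          omega
        · have hben' : benign i m l₂ ξ := hben
          rcases hben' x hocc_x _ _ _ hold.2 with h' | h' <;> omega

end Straddle

/-! #### The walk along the cuts of any play on `τ` starting at `i` -/

section Walk2

variable {T : TTree} {P : DIProblem} {π : Play T P}

theorem walk2 {p q : List ℕ} {τ : Tile} {i m : ℕ}
    (hnodem : (π.pos m).node = q)
    (hstm : ∃ ls r, (π.pos m).st = GState.arg ls r)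
    (hinv : ∀ w, m ≤ w → w ≤ π.len →
      (∀ l r, (π.pos w).st = GState.val l r → benign i m l ((π.pos w).xi)) ∧
      (∀ ls r, (π.pos w).st = GState.arg ls r → w ≠ m →
        ∀ l ∈ ls, benign i m l ((π.pos w).xi)) ∧
      ThetaOk i m T p τ ((π.pos w).th) ∧
      (q <+: (π.pos w).node ∨ ThNoBad i m ((π.pos w).th)))
    (hqodd : (q.length - p.length) % 2 = 1 ∧ p.length < q.length)
    {P₂ : List ℕ} {τ₂ : Tile} {cuts₂ : List (ℕ × ℕ)} {q₂ : List ℕ}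
    (h : π.TilePlayCuts P₂ τ₂ cuts₂ q₂) :
    TileValid T P₂ τ₂ →
    p.length ≤ P₂.length → (P₂.length - p.length) % 2 = 0 →
    (∀ rest', q = P₂ ++ rest' → RouteLeaf τ₂ rest') →
    ∀ a b rest, cuts₂ = (a, b) :: rest → i ≤ a → a ≤ m →
    ∀ y, cuts₂.getLast? = some y → y.2 ≤ m := by
  induction h with
  | simple p₂ subs d a b hsub hna hnb hch =>
    intro hvalid hple hpar hagree aa bb rest hcuts hia ham y hy
    injection hcuts with h1 h2
    injection h1 with ha hb
    subst ha; subst hb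
    have hyy : y = (a, b) := by
      rw [List.getLast?] at hy
      simpa using hy.symm
    subst hyy
    obtain ⟨t₀, hat, hhead⟩ : ∃ t₀, T.at? p₂ = some t₀ ∧ t₀.label.isHeadLabel := by
      cases hvalid with
      | mk _ _ t₀ hat hhead hlen hsubs => exact ⟨t₀, hat, hhead⟩
    exact straddle hnodem hstm hinv hqodd hch hna hnb hat hhead ⟨hple, hpar⟩ hia ham
  | step p₂ subs d a b j₂ cuts' q₀ τ' hsub hna hnb hch hinner IH =>
    intro hvalid hple hpar hagree aa bb rest hcuts hia ham y hy
    injection hcuts with h1 h2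
    injection h1 with ha hb
    subst ha; subst hb
    obtain ⟨t₀, hat, hhead, hsubvalid⟩ :
        ∃ t₀, T.at? p₂ = some t₀ ∧ t₀.label.isHeadLabel ∧
          (∀ i' τ'', subs[i']? = some (some τ'') → TileValid T (p₂ ++ [i', 0]) τ'') := by
      cases hvalid with
      | mk _ _ t₀ hat hhead hlen hsubs => exact ⟨t₀, hat, hhead, hsubs⟩
    have hbm : b ≤ m :=
      straddle hnodem hstm hinv hqodd hch hna hnb hat hhead ⟨hple, hpar⟩ hia ham
    rcases Nat.eq_or_lt_of_le hbm with hbeq | hblt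
    · -- b = m : the node of b is the leaf q, so the route through τ₂ must
      -- declare `subs[d]` a leaf, contradicting the step
      exfalso
      have hq : q = p₂ ++ [d] := by rw [← hnodem, ← hbeq, hnb]
      have hroute := hagree [d] hq
      cases hroute with
      | leaf subs' d' hsome => rw [hsome] at hsub; simp at hsub
    · -- b < m : recurse into the sub-tile
      have hy' : ((b + 1, j₂) :: cuts').getLast? = some y := by
        rwa [List.getLast?_cons_cons] at hy
      refine IH (hsubvalid d τ' hsub) (by simp; omega) (by simp; omega) ?_
        (b + 1) j₂ cuts' rfl (by have := hch.1; omega) (by omega) y hy'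
      intro rest' hq
      rw [List.append_assoc] at hq
      have hroute := hagree ([d, 0] ++ rest') hq
      cases hroute with
      | cons subs' d' τ'' rest'' hsome hroute' =>
        have hττ : τ'' = τ' := by
          rw [hsome] at hsub
          simpa using hsub
        rw [← hττ]
        exact hroute'


theorem cuts_first {T : TTree} {P : DIProblem} {π : Play T P} {P₁ : List ℕ}
    {τ₁ : Tile} {cuts : List (ℕ × ℕ)} {q : List ℕ}
    (h : π.TilePlayCuts P₁ τ₁ cuts q) :
    ∃ a b rest d, cuts = (a, b) :: rest ∧ π.child b a ∧
      (π.pos a).node = P₁ ∧ (π.pos b).node = P₁ ++ [d] := by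
  cases h with
  | simple p₂ subs d a b hsub hna hnb hch => exact ⟨a, b, [], d, rfl, hch, hna, hnb⟩
  | step p₂ subs d a b j₂ cuts' q₀ τ' hsub hna hnb hch hinner =>
    exact ⟨a, b, _, d, rfl, hch, hna, hnb⟩

end Walk2

end St10


/-! ## Statement 10: plays on a j-end basic tile (Proposition 6.19) -/

theorem end_tile_unique_play {T : TTree} {P : DIProblem} (π : Play T P)
    (p q : List ℕ) (τ : Tile)
    (hb : BasicTile T p τ) (hend : EndAt T p τ q)
    (i m n : ℕ) (hm : π.TilePlayOn p τ i m q)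
    (hn : ∃ q', π.TilePlayOn p τ i n q') (hge : m ≤ n) :
    n = m := by
  obtain ⟨hvalid, -⟩ := hb
  obtain ⟨cuts1, x1, y1, hderiv1, hhead1, hx1, hlast1, hy1⟩ := hm
  obtain ⟨q', cuts2, x2, y2, hderiv2, hhead2, hx2, hlast2, hy2⟩ := hn
  -- data of the first cut of the given play `π(i, m)`
  obtain ⟨a₁, b₁, rest₁, d₁, hc₁, hch₁, hna₁, hnb₁⟩ := St10.cuts_first hderiv1
  have hx1' : x1 = (a₁, b₁) := by
    rw [hc₁] at hhead1
    rw [List.head?] at hhead1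
    simpa using hhead1.symm
  have ha₁ : a₁ = i := by rw [hx1'] at hx1; exact hx1
  rw [ha₁] at hc₁ hch₁ hna₁
  -- the head node of `τ`
  obtain ⟨t₀, hat, hhead⟩ : ∃ t₀, T.at? p = some t₀ ∧ t₀.label.isHeadLabel := by
    cases hvalid with
    | mk _ _ t₀ hat hhead hlen hsubs => exact ⟨t₀, hat, hhead⟩
  have h1i : 1 ≤ i := (St10.cut_child_analysis hch₁ hna₁ hnb₁ hat hhead).1
  have hilen : i ≤ π.len := by
    have := hch₁.1
    have := hch₁.2.1
    omega
  -- the starting table is hereditarily benign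
  have hok_i : St10.ThetaOk i m T p τ ((π.pos i).th) :=
    St10.thNoBad_thetaOk
      (St10.goodT_thNoBad (St10.prov π i h1i hilen).1 (le_refl i))
  -- walk along the cuts of `π(i, m)`
  obtain ⟨hokm, hnodem, hstm, hmlen, him, ⟨suf, hqsuf, hroute, hodd⟩, hqlam⟩ :=
    St10.walk1 hderiv1 hvalid (fun _ h => h) i b₁ rest₁ hc₁ hok_i y1 hlast1
  rw [hy1] at hokm hnodem hstm hmlen him
  -- parity of the leaf path
  have hqlen : q.length = p.length + suf.length := by
    rw [hqsuf]
    simp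
  have hsufpos : 1 ≤ suf.length := by omega
  have hqodd : (q.length - p.length) % 2 = 1 ∧ p.length < q.length := by omega
  have h1m : 1 ≤ m := by omega
  -- the invariant for all positions after `m`
  have hinv := St10.inv_all hend hqlam hnodem hstm hokm h1m
  -- data of the first cut of the second play
  obtain ⟨a₂, b₂, rest₂, d₂, hc₂, hch₂, hna₂, hnb₂⟩ := St10.cuts_first hderiv2
  have hx2' : x2 = (a₂, b₂) := by
    rw [hc₂] at hhead2
    rw [List.head?] at hhead2
    simpa using hhead2.symm
  have ha₂ : a₂ = i := by rw [hx2'] at hx2; exact hx2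
  -- the second play never goes past `m`
  have hn_le : y2.2 ≤ m := by
    refine St10.walk2 hnodem hstm hinv hqodd hderiv2 hvalid (le_refl _) (by simp) ?_
      a₂ b₂ rest₂ hc₂ (by omega) (by omega) y2 hlast2
    intro rest' hq'
    have hEq : p ++ rest' = p ++ suf := by rw [← hq', hqsuf]
    have : rest' = suf := by
      have := List.append_cancel_left hEq
      exact this
    rw [this]
    exact hroute
  omega
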